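/- arXiv:1801.08056 — 3 statements merged into one kernel-verified Lean document; each statement's English description precedes it below -/
import Mathlib

section
/- Let D be the derivation of ℚ[x,y,z] with D(x)=xyz, D(y)=yz², D(z)=y²z. For every n ≥ 0, D^n(xy) = xy · Σ_{π ∈ B_n} y^{fdes(π)} z^{2n − fdes(π)}, an identity in ℚ[x,y,z]. -/
section AuxLists
open List Finset

namespace SPAux

def dsc (a : ℤ) : List ℤ → ℕ
  | [] => 0
  | b :: _ => if b < a then 1 else 0

def desL : List ℤ → ℕ
  | [] => 0
  | a :: t => dsc a t + desL t

def negHead : List ℤ → ℕ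
  | [] => 0
  | a :: _ => if a < 0 then 1 else 0

def fdesL (l : List ℤ) : ℕ := 2 * desL l + negHead l

lemma dsc_insertIdx {a M : ℤ} (h : ¬ M < a) :
    ∀ (k : ℕ) (t : List ℤ), dsc a (t.insertIdx k M) = if k = 0 then 0 else dsc a t
  | 0, t => by simp [insertIdx_zero, dsc, h]
  | (k+1), [] => by simp [insertIdx_succ_nil, dsc]
  | (k+1), b :: t => by simp [insertIdx_succ_cons, dsc]

lemma dsc_insertIdx' {a m : ℤ} (h : m < a) :
    ∀ (k : ℕ) (t : List ℤ), dsc a (t.insertIdx k m) = if k = 0 then 1 else dsc a t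
  | 0, t => by simp [insertIdx_zero, dsc, h]
  | (k+1), [] => by simp [insertIdx_succ_nil, dsc]
  | (k+1), b :: t => by simp [insertIdx_succ_cons, dsc]

variable {A : Type*} [AddCommGroup A]

lemma sum_insertIdx_big (M : ℤ) :
    ∀ (l : List ℤ) (F : ℕ → A), (∀ a ∈ l, a < M) →
    ∑ k ∈ range (l.length + 1), F (desL (l.insertIdx k M)) =
      ((desL l : ℤ) + 1) • F (desL l) + ((l.length : ℤ) - (desL l : ℤ)) • F (desL l + 1)
  | [], F, _ => by simp [desL, dsc]
  | a :: t, F, h => by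
    have ha : a < M := h a (by simp)
    have ht : ∀ x ∈ t, x < M := fun x hx => h x (by simp [hx])
    have key := sum_insertIdx_big M t (fun m => F (dsc a t + m)) ht
    rw [Finset.sum_range_succ'] at key
    rw [show (a :: t).length + 1 = (t.length + 1) + 1 from rfl, Finset.sum_range_succ',
      Finset.sum_range_succ']
    simp only [insertIdx_succ_cons, insertIdx_zero]
    have e1 : ∀ k, desL (a :: t.insertIdx (k+1) M) = dsc a t + desL (t.insertIdx (k+1) M) := by
      intro k; simp [desL, dsc_insertIdx (not_lt.2 ha.le)]
    simp only [e1]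
    have e2 : desL (a :: M :: t) = dsc M t + desL t := by
      simp [desL, dsc, not_lt.2 ha.le]
    have e3 : desL (M :: a :: t) = 1 + (dsc a t + desL t) := by
      simp [desL, dsc, ha]
    have e4 : desL (M :: t) = dsc M t + desL t := by cases t <;> simp [desL, dsc]
    simp only [insertIdx_zero] at key
    rw [e4] at key
    have key2 : ∑ k ∈ range t.length, F (dsc a t + desL (t.insertIdx (k+1) M)) =
        ((desL t : ℤ) + 1) • F (dsc a t + desL t) +
          ((t.length : ℤ) - (desL t : ℤ)) • F (dsc a t + (desL t + 1)) -
          F (dsc a t + (dsc M t + desL t)) := by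
      rw [eq_sub_iff_add_eq]; exact key
    rw [key2, e2, e3]
    show _ = ((desL (a :: t) : ℤ) + 1) • F (desL (a :: t)) +
        ((t.length : ℤ) + 1 - (desL (a :: t) : ℤ)) • F (desL (a :: t) + 1)
    have e5 : desL (a :: t) = dsc a t + desL t := rfl
    rw [e5]
    rcases t with _ | ⟨b, t'⟩
    · simp [desL, dsc]
    · have hb : dsc M (b :: t') = 1 := by simp [dsc, h b (by simp)]
      rw [hb]
      by_cases hba : b < a
      · have hd : dsc a (b :: t') = 1 := by simp [dsc, hba]
        rw [hd]; ring_nf; push_cast; module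
      · have hd : dsc a (b :: t') = 0 := by simp [dsc, hba]
        rw [hd]; ring_nf; push_cast; module

lemma sum_insertIdx_small (m : ℤ) :
    ∀ (l : List ℤ) (F : ℕ → A), (∀ a ∈ l, m < a) →
    ∑ k ∈ range (l.length + 1), F (desL (l.insertIdx k m)) =
      ((desL l : ℤ) + 1) • F (desL l) + ((l.length : ℤ) - (desL l : ℤ)) • F (desL l + 1)
  | [], F, _ => by simp [desL, dsc]
  | a :: t, F, h => by
    have ha : m < a := h a (by simp)
    have ht : ∀ x ∈ t, m < x := fun x hx => h x (by simp [hx])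
    have key := sum_insertIdx_small m t (fun x => F (dsc a t + x)) ht
    rw [Finset.sum_range_succ'] at key
    simp only [insertIdx_zero] at key
    rw [show (a :: t).length + 1 = (t.length + 1) + 1 from rfl, Finset.sum_range_succ',
      Finset.sum_range_succ']
    simp only [insertIdx_succ_cons, insertIdx_zero]
    have e1 : ∀ k, desL (a :: t.insertIdx (k+1) m) = dsc a t + desL (t.insertIdx (k+1) m) := by
      intro k; simp [desL, dsc_insertIdx' ha]
    simp only [e1]
    have e2 : desL (a :: m :: t) = 1 + (dsc m t + desL t) := by
      simp [desL, dsc, ha]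
    have e3 : desL (m :: a :: t) = dsc a t + desL t := by
      simp [desL, dsc, not_lt.2 ha.le]
    have e4 : desL (m :: t) = dsc m t + desL t := by cases t <;> simp [desL, dsc]
    rw [e4] at key
    have key2 : ∑ k ∈ range t.length, F (dsc a t + desL (t.insertIdx (k+1) m)) =
        ((desL t : ℤ) + 1) • F (dsc a t + desL t) +
          ((t.length : ℤ) - (desL t : ℤ)) • F (dsc a t + (desL t + 1)) -
          F (dsc a t + (dsc m t + desL t)) := by
      rw [eq_sub_iff_add_eq]; exact key
    rw [key2, e2, e3]
    show _ = ((desL (a :: t) : ℤ) + 1) • F (desL (a :: t)) +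
        ((t.length : ℤ) + 1 - (desL (a :: t) : ℤ)) • F (desL (a :: t) + 1)
    have e5 : desL (a :: t) = dsc a t + desL t := rfl
    rw [e5]
    rcases t with _ | ⟨b, t'⟩
    · simp [desL, dsc]; abel
    · have hb : dsc m (b :: t') = 0 := by simp [dsc, not_lt.2 (ht b (by simp)).le]
      rw [hb]
      by_cases hba : b < a
      · have hd : dsc a (b :: t') = 1 := by simp [dsc, hba]
        rw [hd]; ring_nf; module
      · have hd : dsc a (b :: t') = 0 := by simp [dsc, hba]
        rw [hd]; ring_nf; module

lemma sum_insertIdx_fdes (M : ℤ) (hM : 0 < M) (l : List ℤ)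
    (h : ∀ a ∈ l, -M < a ∧ a < M) (F : ℕ → A) :
    ∑ k ∈ range (l.length + 1),
        (F (fdesL (l.insertIdx k M)) + F (fdesL (l.insertIdx k (-M)))) =
      F (fdesL l + 1) + ((fdesL l : ℤ) + 1) • F (fdesL l) +
        (2 * (l.length : ℤ) - (fdesL l : ℤ)) • F (fdesL l + 2) := by
  rcases l with _ | ⟨a, t⟩
  · have h1 : fdesL [M] = 0 := by simp [fdesL, desL, negHead, dsc, not_lt.2 hM.le]
    have h2 : fdesL [(-M)] = 1 := by simp [fdesL, desL, negHead, dsc, neg_neg_iff_pos.2 hM, hM]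
    have h3 : fdesL [] = 0 := by simp [fdesL, desL, negHead]
    rw [show ([]:List ℤ).length + 1 = 1 from rfl, Finset.sum_range_one]
    simp only [insertIdx_zero]
    rw [h1, h2, h3]
    norm_num
    module
  · set c := negHead (a :: t) with hc
    have hF1 := sum_insertIdx_big M (a :: t) (fun x => F (2 * x + c)) (fun x hx => (h x hx).2)
    have hF2 := sum_insertIdx_small (-M) (a :: t) (fun x => F (2 * x + c))
      (fun x hx => (h x hx).1)
    rw [Finset.sum_range_succ'] at hF1 hF2
    simp only [insertIdx_succ_cons, insertIdx_zero] at hF1 hF2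
    rw [show (a :: t).length + 1 = (t.length + 1) + 1 from rfl, Finset.sum_range_succ']
    simp only [insertIdx_succ_cons, insertIdx_zero]
    have ef : ∀ (r : List ℤ), fdesL (a :: r) = 2 * desL (a :: r) + c := by
      intro r; simp [fdesL, negHead, hc]
    simp only [ef]
    have key1 : ∑ k ∈ range ((a :: t).length), F (2 * desL (a :: t.insertIdx k M) + c) =
        ((desL (a :: t) : ℤ) + 1) • F (2 * desL (a :: t) + c) +
          (((a :: t).length : ℤ) - (desL (a :: t) : ℤ)) • F (2 * (desL (a :: t) + 1) + c) -
          F (2 * desL (M :: a :: t) + c) := by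
      rw [eq_sub_iff_add_eq]; exact hF1
    have key2 : ∑ k ∈ range ((a :: t).length), F (2 * desL (a :: t.insertIdx k (-M)) + c) =
        ((desL (a :: t) : ℤ) + 1) • F (2 * desL (a :: t) + c) +
          (((a :: t).length : ℤ) - (desL (a :: t) : ℤ)) • F (2 * (desL (a :: t) + 1) + c) -
          F (2 * desL ((-M) :: a :: t) + c) := by
      rw [eq_sub_iff_add_eq]; exact hF2
    rw [Finset.sum_add_distrib]
    rw [show ((a :: t).length) = t.length + 1 from rfl] at key1 key2
    rw [key1, key2]
    have eM : desL (M :: a :: t) = desL (a :: t) + 1 := by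
      have h5 : dsc M (a :: t) = 1 := by simp [dsc, (h a (by simp)).2]
      simp only [desL, h5]; omega
    have emM : desL ((-M) :: a :: t) = desL (a :: t) := by
      have h5 : dsc (-M) (a :: t) = 0 := by simp [dsc, not_lt.2 (h a (by simp)).1.le]
      simp only [desL, h5]; omega
    have fM : fdesL (M :: a :: t) = 2 * (desL (a :: t) + 1) := by
      simp [fdesL, negHead, not_lt.2 hM.le, eM]
    have fmM : fdesL ((-M) :: a :: t) = 2 * desL (a :: t) + 1 := by
      simp [fdesL, negHead, neg_neg_iff_pos.2 hM, emM, hM]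
    rw [eM, emM, fM, fmM]
    have hc01 : c = 0 ∨ c = 1 := by
      rw [hc]; by_cases h' : a < 0
      · right; simp [negHead, h']
      · left; simp [negHead, h']
    simp only [List.length_cons]
    rcases hc01 with h0 | h0 <;> rw [h0] <;> push_cast <;> ring_nf <;> module
end SPAux
end AuxLists

/-- Signed permutations (the hyperoctahedral group `B_n`), encoded as a pair of a
permutation of `Fin n` and a sign vector; the one-line word is recovered by `bval`. -/
abbrev SignedPerm (n : ℕ) := Equiv.Perm (Fin n) × (Fin n → Bool)

/-- The value `π(i) ∈ ±[n]` of the signed permutation at position `i ∈ {1,…,n}`,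
with the convention `π(0) = 0` (and value `0` outside the range). -/
def bval {n : ℕ} (π : SignedPerm n) (i : ℕ) : ℤ :=
  if h : 1 ≤ i ∧ i ≤ n then
    (if π.2 ⟨i - 1, by omega⟩ then -(((π.1 ⟨i - 1, by omega⟩ : ℕ) : ℤ) + 1)
      else ((π.1 ⟨i - 1, by omega⟩ : ℕ) : ℤ) + 1)
  else 0

/-- The type-A descent number of a signed permutation:
`#{i ∈ [n-1] : π(i) > π(i+1)}`. -/
def desA {n : ℕ} (π : SignedPerm n) : ℕ :=
  ((Finset.Icc 1 (n - 1)).filter (fun i => bval π (i+1) < bval π i)).card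

/-- The type-B descent number of a signed permutation:
`#{i ∈ {0,1,…,n-1} : π(i) > π(i+1)}` with `π(0) = 0`. -/
def desB {n : ℕ} (π : SignedPerm n) : ℕ :=
  ((Finset.range n).filter (fun i => bval π (i+1) < bval π i)).card

/-- The flag descent number: `2·des_A(π)+1` if `π(1) < 0`, and `2·des_A(π)` otherwise. -/
def fdes {n : ℕ} (π : SignedPerm n) : ℕ :=
  if bval π 1 < 0 then 2 * desA π + 1 else 2 * desA π


namespace SPAux

def wrd {n : ℕ} (π : SignedPerm n) : List ℤ :=
  (List.range n).map (fun i => bval π (i+1))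

lemma wrd_length {n : ℕ} (π : SignedPerm n) : (wrd π).length = n := by simp [wrd]

lemma bval_out {n : ℕ} (π : SignedPerm n) (i : ℕ) (h : ¬ (1 ≤ i ∧ i ≤ n)) : bval π i = 0 := by
  rw [bval, dif_neg h]

lemma wrd_getD {n : ℕ} (π : SignedPerm n) (i : ℕ) : (wrd π).getD i 0 = bval π (i+1) := by
  rcases lt_or_ge i n with h | h
  · rw [List.getD_eq_getElem _ _ (by simp [wrd_length, h])]
    simp [wrd]
  · rw [List.getD_eq_default _ _ (by simp [wrd_length, h])]
    rw [bval_out _ _ (by omega)]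

lemma desL_eq_sum : ∀ l : List ℤ,
    desL l = ∑ i ∈ Finset.range (l.length - 1),
      (if l.getD (i+1) 0 < l.getD i 0 then 1 else 0)
  | [] => by simp [desL]
  | [a] => by simp [desL, dsc]
  | a :: b :: t => by
    have ih := desL_eq_sum (b :: t)
    have hlen : (a :: b :: t).length - 1 = ((b :: t).length - 1) + 1 := by simp
    rw [hlen, Finset.sum_range_succ']
    have h0 : (if (a :: b :: t).getD 1 0 < (a :: b :: t).getD 0 0 then 1 else 0) =
        dsc a (b :: t) := by simp [dsc, List.getD]
    have hsh : ∀ i, (if (a :: b :: t).getD (i+1+1) 0 < (a :: b :: t).getD (i+1) 0 then 1 else 0) =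
        (if (b :: t).getD (i+1) 0 < (b :: t).getD i 0 then (1:ℕ) else 0) := by
      intro i; simp only [List.getD_cons_succ]
    simp only [hsh, h0]
    rw [← ih]
    show desL (a :: b :: t) = desL (b :: t) + dsc a (b :: t)
    simp [desL]; omega

lemma desA_eq {n : ℕ} (π : SignedPerm n) : desA π = desL (wrd π) := by
  rw [desA, Finset.card_filter]
  rw [desL_eq_sum, wrd_length]
  rw [show Finset.Icc 1 (n-1) = Finset.Ico 1 ((n-1)+1) from (Finset.Ico_add_one_right_eq_Icc 1 (n-1)).symm]
  rw [Finset.sum_Ico_eq_sum_range]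
  apply Finset.sum_congr (by rw [Nat.add_sub_cancel])
  intro i _
  simp only [wrd_getD]
  rw [show 1 + i + 1 = i + 1 + 1 from by omega, show 1 + i = i + 1 from by omega]

lemma negHead_wrd {n : ℕ} (π : SignedPerm n) :
    negHead (wrd π) = if bval π 1 < 0 then 1 else 0 := by
  cases n with
  | zero =>
    simp [wrd, negHead, bval_out π 1 (by omega)]
  | succ m =>
    rw [wrd, List.range_succ_eq_map]
    simp [negHead]

lemma fdes_eq {n : ℕ} (π : SignedPerm n) : fdes π = fdesL (wrd π) := by
  rw [fdes, fdesL, desA_eq, negHead_wrd]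
  split <;> omega

lemma wrd_mem {n : ℕ} (π : SignedPerm n) {a : ℤ} (ha : a ∈ wrd π) :
    -((n : ℤ) + 1) < a ∧ a < (n : ℤ) + 1 := by
  rw [wrd] at ha
  simp only [List.mem_map, List.mem_range] at ha
  obtain ⟨i, hi, rfl⟩ := ha
  rw [bval, dif_pos (by omega)]
  have hlt : ((π.1 ⟨i + 1 - 1, by omega⟩ : Fin n) : ℕ) < n := (π.1 _).isLt
  split <;> push_cast <;> omega

lemma fdes_le {n : ℕ} (π : SignedPerm n) : fdes π ≤ 2 * n := by
  have h1 : desA π ≤ n - 1 := by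
    rw [desA]
    calc ((Finset.Icc 1 (n - 1)).filter _).card ≤ (Finset.Icc 1 (n-1)).card :=
          Finset.card_filter_le _ _
      _ = n - 1 := by rw [Nat.card_Icc]; omega
  rw [fdes]
  cases n with
  | zero =>
    rw [bval_out π 1 (by omega)]
    simp at h1 ⊢
    omega
  | succ m => split <;> omega

end SPAux
namespace SPAux

def pins {n : ℕ} (p : Fin (n+1)) (σ : Equiv.Perm (Fin n)) : Equiv.Perm (Fin (n+1)) :=
  (finSuccEquiv' p).trans ((Equiv.optionCongr σ).trans (finSuccEquiv' (Fin.last n)).symm)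

lemma pins_self {n : ℕ} (p : Fin (n+1)) (σ : Equiv.Perm (Fin n)) :
    pins p σ p = Fin.last n := by
  simp [pins, finSuccEquiv'_at, finSuccEquiv'_symm_none]

lemma pins_succAbove {n : ℕ} (p : Fin (n+1)) (σ : Equiv.Perm (Fin n)) (j : Fin n) :
    pins p σ (p.succAbove j) = (σ j).castSucc := by
  simp [pins, finSuccEquiv'_succAbove, finSuccEquiv'_symm_some, Fin.succAbove_last]

def ins {n : ℕ} (x : SignedPerm n × Fin (n+1) × Bool) : SignedPerm (n+1) :=
  ⟨pins x.2.1 x.1.1, fun q => (finSuccEquiv' x.2.1 q).elim x.2.2 x.1.2⟩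

lemma ins_snd_self {n : ℕ} (π : SignedPerm n) (p : Fin (n+1)) (s : Bool) :
    (ins (π, p, s)).2 p = s := by
  simp [ins, finSuccEquiv'_at]

lemma ins_snd_succAbove {n : ℕ} (π : SignedPerm n) (p : Fin (n+1)) (s : Bool) (j : Fin n) :
    (ins (π, p, s)).2 (p.succAbove j) = π.2 j := by
  simp [ins, finSuccEquiv'_succAbove]

lemma bval_ins_self {n : ℕ} (π : SignedPerm n) (p : Fin (n+1)) (s : Bool) :
    bval (ins (π, p, s)) (p.val + 1) = if s then -((n:ℤ)+1) else (n:ℤ)+1 := by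
  rw [bval, dif_pos (by constructor <;> omega)]
  have hq : (⟨p.val + 1 - 1, by omega⟩ : Fin (n+1)) = p := by
    apply Fin.ext; simp
  rw [hq]
  have h1 : (ins (π, p, s)).1 p = Fin.last n := pins_self p π.1
  rw [h1, ins_snd_self]
  simp [Fin.val_last]

lemma bval_ins_succAbove {n : ℕ} (π : SignedPerm n) (p : Fin (n+1)) (s : Bool) (j : Fin n) :
    bval (ins (π, p, s)) ((p.succAbove j).val + 1) = bval π (j.val + 1) := by
  rw [bval, dif_pos (by constructor <;> omega), bval, dif_pos (by constructor <;> omega)]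
  have hq : (⟨(p.succAbove j).val + 1 - 1, by omega⟩ : Fin (n+1)) = p.succAbove j := by
    apply Fin.ext; simp
  have hj : (⟨j.val + 1 - 1, by omega⟩ : Fin n) = j := by
    apply Fin.ext; simp
  rw [hq, hj]
  have h1 : (ins (π, p, s)).1 (p.succAbove j) = (π.1 j).castSucc := pins_succAbove p π.1 j
  rw [h1, ins_snd_succAbove]
  simp [Fin.coe_castSucc]

lemma wrd_ins {n : ℕ} (π : SignedPerm n) (p : Fin (n+1)) (s : Bool) :
    wrd (ins (π, p, s)) = (wrd π).insertIdx p.val (if s then -((n:ℤ)+1) else (n:ℤ)+1) := by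
  have hp : p.val ≤ (wrd π).length := by rw [wrd_length]; omega
  apply List.ext_getElem
  · rw [wrd_length, List.length_insertIdx_of_le_length hp, wrd_length]
  · intro m h1 h2
    rw [wrd_length] at h1
    have hL : (wrd (ins (π, p, s)))[m] = bval (ins (π, p, s)) (m + 1) := by
      simp [wrd]
    rw [hL]
    rcases lt_trichotomy m p.val with hm | hm | hm
    · have hmn : m < n := by omega
      rw [List.getElem_insertIdx_of_lt hm h2]
      have hj : (p.succAbove ⟨m, hmn⟩) = ⟨m, by omega⟩ := by
        rw [Fin.succAbove_of_castSucc_lt]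
        · apply Fin.ext; simp
        · rw [Fin.lt_def]; simpa using hm
      have := bval_ins_succAbove π p s ⟨m, hmn⟩
      rw [hj] at this
      simp only [Fin.val_mk] at this ⊢
      rw [this]
      simp [wrd]
    · subst hm
      rw [List.getElem_insertIdx_self h2]
      have := bval_ins_self π p s
      exact this
    · obtain ⟨k, rfl⟩ : ∃ k, m = p.val + k + 1 := ⟨m - p.val - 1, by omega⟩
      have hk : p.val + k < (wrd π).length := by rw [wrd_length]; omega
      have hR := List.getElem_insertIdx_add_succ (wrd π)
        (if s then -((n:ℤ)+1) else (n:ℤ)+1) p.val k hk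
      rw [hR]
      have hmn : p.val + k < n := by omega
      have hj : (p.succAbove ⟨p.val + k, hmn⟩) = ⟨p.val + k + 1, by omega⟩ := by
        rw [Fin.succAbove_of_le_castSucc]
        · apply Fin.ext; simp
        · rw [Fin.le_def]; simp
      have hb := bval_ins_succAbove π p s ⟨p.val + k, hmn⟩
      rw [hj] at hb
      simp only [Fin.val_mk] at hb ⊢
      rw [hb]
      simp [wrd]

lemma ins_bijective {n : ℕ} : Function.Bijective (ins (n := n)) := by
  rw [Fintype.bijective_iff_injective_and_card]
  constructor
  · rintro ⟨⟨σ, ε⟩, p, s⟩ ⟨⟨σ', ε'⟩, p', s'⟩ h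
    have hperm : pins p σ = pins p' σ' := congrArg Prod.fst h
    have hsign : (fun q => (finSuccEquiv' p q).elim s ε) =
        (fun q => (finSuccEquiv' p' q).elim s' ε') := congrArg Prod.snd h
    have hp : p = p' := by
      apply (pins p' σ').injective
      rw [← hperm, pins_self, hperm, pins_self]
    subst hp
    have hσ : σ = σ' := by
      apply Equiv.ext; intro j
      have h1 : pins p σ (p.succAbove j) = pins p σ' (p.succAbove j) := by rw [hperm]
      rw [pins_succAbove, pins_succAbove] at h1
      exact Fin.castSucc_injective n h1
    have hs : s = s' := by
      have := congrFun hsign p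
      simpa [finSuccEquiv'_at] using this
    have hε : ε = ε' := by
      funext j
      have := congrFun hsign (p.succAbove j)
      simpa [finSuccEquiv'_succAbove] using this
    rw [hσ, hs, hε]
  · simp only [Fintype.card_prod, Fintype.card_perm, Fintype.card_fun, Fintype.card_fin,
      Fintype.card_bool, Nat.factorial_succ]
    ring

open MvPolynomial in
lemma S_succ (n : ℕ) :
    (∑ π : SignedPerm (n+1), (X 1 ^ fdes π * X 2 ^ (2*(n+1) - fdes π) : MvPolynomial (Fin 3) ℚ)) =
    ∑ π : SignedPerm n,
      ((X 1 ^ (fdes π + 1) * X 2 ^ (2*n - fdes π + 1))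
        + ((fdes π : ℤ) + 1) • (X 1 ^ fdes π * X 2 ^ (2*n - fdes π + 2))
        + ((2*n : ℤ) - (fdes π : ℤ)) • (X 1 ^ (fdes π + 2) * X 2 ^ (2*n - fdes π))) := by
  classical
  have hbij := Fintype.sum_bijective (ins (n := n)) ins_bijective
    (fun x => (X 1 ^ fdes (ins x) * X 2 ^ (2*(n+1) - fdes (ins x)) : MvPolynomial (Fin 3) ℚ))
    (fun π' => (X 1 ^ fdes π' * X 2 ^ (2*(n+1) - fdes π') : MvPolynomial (Fin 3) ℚ))
    (fun x => rfl)
  rw [← hbij, Fintype.sum_prod_type]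
  apply Finset.sum_congr rfl
  intro π _
  rw [Fintype.sum_prod_type]
  have hwT : ∀ p : Fin (n+1), fdes (ins (π, p, true)) =
      fdesL ((wrd π).insertIdx p.val (-((n:ℤ)+1))) := by
    intro p; rw [fdes_eq, wrd_ins]; norm_num
  have hwF : ∀ p : Fin (n+1), fdes (ins (π, p, false)) =
      fdesL ((wrd π).insertIdx p.val ((n:ℤ)+1)) := by
    intro p; rw [fdes_eq, wrd_ins]; norm_num
  simp only [Fintype.sum_bool, hwT, hwF]
  have key := sum_insertIdx_fdes ((n:ℤ)+1) (by positivity) (wrd π)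
    (fun a ha => wrd_mem π ha)
    (fun gg => (X 1 ^ gg * X 2 ^ (2*(n+1) - gg) : MvPolynomial (Fin 3) ℚ))
  rw [wrd_length, ← fdes_eq] at key
  have key2 : (∑ k ∈ Finset.range (n+1),
      ((X 1 ^ (fdesL ((wrd π).insertIdx k (-((n:ℤ)+1)))) *
          X 2 ^ (2*(n+1) - fdesL ((wrd π).insertIdx k (-((n:ℤ)+1)))) : MvPolynomial (Fin 3) ℚ)
        + X 1 ^ (fdesL ((wrd π).insertIdx k ((n:ℤ)+1))) *
          X 2 ^ (2*(n+1) - fdesL ((wrd π).insertIdx k ((n:ℤ)+1))))) =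
      (X 1 ^ (fdes π + 1) * X 2 ^ (2*(n+1) - (fdes π + 1)) : MvPolynomial (Fin 3) ℚ)
        + ((fdes π : ℤ) + 1) • (X 1 ^ fdes π * X 2 ^ (2*(n+1) - fdes π))
        + (2 * (n:ℤ) - (fdes π : ℤ)) • (X 1 ^ (fdes π + 2) * X 2 ^ (2*(n+1) - (fdes π + 2))) := by
    rw [← key]
    exact Finset.sum_congr rfl (fun k _ => add_comm _ _)
  rw [← Fin.sum_univ_eq_sum_range (fun k => ((X 1 ^ (fdesL ((wrd π).insertIdx k (-((n:ℤ)+1)))) *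
          X 2 ^ (2*(n+1) - fdesL ((wrd π).insertIdx k (-((n:ℤ)+1)))) : MvPolynomial (Fin 3) ℚ)
        + X 1 ^ (fdesL ((wrd π).insertIdx k ((n:ℤ)+1))) *
          X 2 ^ (2*(n+1) - fdesL ((wrd π).insertIdx k ((n:ℤ)+1))))) (n+1)] at key2
  rw [key2]
  have hg := fdes_le π
  rw [show 2*(n+1) - (fdes π + 1) = 2*n - fdes π + 1 from by omega,
    show 2*(n+1) - fdes π = 2*n - fdes π + 2 from by omega,
    show 2*(n+1) - (fdes π + 2) = 2*n - fdes π from by omega]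

open MvPolynomial in
lemma step_alg (D : Derivation ℚ (MvPolynomial (Fin 3) ℚ) (MvPolynomial (Fin 3) ℚ))
    (hx : D (X 0) = X 0 * X 1 * X 2)
    (hy : D (X 1) = X 1 * X 2 ^ 2)
    (hz : D (X 2) = X 1 ^ 2 * X 2) (g e : ℕ) :
    D (X 0 * X 1 * (X 1 ^ g * X 2 ^ e)) =
      X 0 * X 1 * ((X 1 ^ (g + 1) * X 2 ^ (e + 1))
        + ((g : ℤ) + 1) • (X 1 ^ g * X 2 ^ (e + 2))
        + (e : ℤ) • (X 1 ^ (g + 2) * X 2 ^ e)) := by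
  rw [show (X 0 * X 1 * (X 1^g * X 2^e) : MvPolynomial (Fin 3) ℚ)
      = X 0 * (X 1^(g+1) * X 2^e) from by ring]
  rw [Derivation.leibniz, Derivation.leibniz, Derivation.leibniz_pow, Derivation.leibniz_pow,
    hx, hy, hz]
  simp only [smul_eq_mul, nsmul_eq_mul, zsmul_eq_mul, Nat.add_sub_cancel]
  cases e with
  | zero => push_cast; ring_nf
  | succ e' =>
    simp only [Nat.add_sub_cancel]
    push_cast
    ring

end SPAux

open MvPolynomial in
theorem statement_0
    (D : Derivation ℚ (MvPolynomial (Fin 3) ℚ) (MvPolynomial (Fin 3) ℚ))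
    (hx : D (X 0) = X 0 * X 1 * X 2)
    (hy : D (X 1) = X 1 * X 2 ^ 2)
    (hz : D (X 2) = X 1 ^ 2 * X 2) (n : ℕ) :
    (D.toLinearMap ^ n) (X 0 * X 1) =
      X 0 * X 1 * ∑ π : SignedPerm n, X 1 ^ fdes π * X 2 ^ (2 * n - fdes π) := by
  induction n with
  | zero =>
    rw [pow_zero, Module.End.one_apply]
    have h0 : ∀ π : SignedPerm 0, fdes π = 0 := by
      intro π
      have hd : desA π = 0 := by
        rw [desA]
        rw [show Finset.Icc 1 (0-1) = (∅ : Finset ℕ) from by decide]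
        simp
      rw [fdes, SPAux.bval_out π 1 (by omega), hd]
      norm_num
    simp only [h0]
    norm_num
  | succ n ih =>
    rw [pow_succ', Module.End.mul_apply, ih]
    have hD : ∀ q : MvPolynomial (Fin 3) ℚ, D.toLinearMap q = D q := fun q => rfl
    rw [hD, SPAux.S_succ n, Finset.mul_sum, Finset.mul_sum, map_sum]
    apply Finset.sum_congr rfl
    intro π _
    have hg := SPAux.fdes_le π
    have hcast : ((2*n : ℤ) - (fdes π : ℤ)) = ((2*n - fdes π : ℕ) : ℤ) := by
      push_cast [hg]; ring
    rw [hcast]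
    exact SPAux.step_alg D hx hy hz (fdes π) (2*n - fdes π)
end

section
/- Let D be the derivation of ℚ[x,y,z] with D(x)=xyz, D(y)=yz², D(z)=y²z. For every n ≥ 0, D^n(y²) = y² · Σ_{π ∈ B_n} y^{2·des_A(π)} z^{2n − 2·des_A(π)}, an identity in ℚ[x,y,z]. -/
/-- extension of a permutation of `Fin n` to `Fin (n+1)` fixing `last`. -/
def extPerm {n : ℕ} (σ : Equiv.Perm (Fin n)) : Equiv.Perm (Fin (n+1)) :=
  finSuccEquivLast.trans ((Equiv.optionCongr σ).trans finSuccEquivLast.symm)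

lemma extPerm_castSucc {n : ℕ} (σ : Equiv.Perm (Fin n)) (j : Fin n) :
    extPerm σ j.castSucc = (σ j).castSucc := by
  simp [extPerm]

lemma extPerm_last {n : ℕ} (σ : Equiv.Perm (Fin n)) :
    extPerm σ (Fin.last n) = Fin.last n := by
  simp [extPerm]

/-- the "shift" cycle: `p ↦ last`, `i ↦ i` for `i < p`, `i ↦ i-1` for `i > p`. -/
def shiftCycle {n : ℕ} (p : Fin (n+1)) : Equiv.Perm (Fin (n+1)) :=
  (Fin.revPerm.trans (p.rev.cycleRange)).trans Fin.revPerm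

lemma shiftCycle_lt {n : ℕ} (p i : Fin (n+1)) (h : i < p) : shiftCycle p i = i := by
  simp only [shiftCycle, Equiv.trans_apply, Fin.revPerm_apply]
  rw [Fin.cycleRange_of_gt (by simpa using h), Fin.rev_rev]

lemma shiftCycle_self {n : ℕ} (p : Fin (n+1)) : shiftCycle p p = Fin.last n := by
  simp only [shiftCycle, Equiv.trans_apply, Fin.revPerm_apply]
  rw [Fin.cycleRange_self]
  simp [Fin.rev_zero]

lemma shiftCycle_gt {n : ℕ} (p i : Fin (n+1)) (h : p < i) :
    shiftCycle p i = ⟨i.val - 1, by omega⟩ := by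
  simp only [shiftCycle, Equiv.trans_apply, Fin.revPerm_apply]
  rw [Fin.cycleRange_of_lt (by simpa using h)]
  have h1 : i.rev < Fin.last n := by
    have hlt := Fin.rev_lt_rev.mpr h
    exact lt_of_lt_of_le hlt (Fin.le_last _)
  have hi1 : 1 ≤ i.val := by have := Fin.lt_def.mp h; omega
  apply Fin.ext
  rw [Fin.val_rev, Fin.val_add_one_of_lt h1, Fin.val_rev]
  have := i.isLt
  simp only []
  omega

def insPerm {n : ℕ} (σ : Equiv.Perm (Fin n)) (p : Fin (n+1)) : Equiv.Perm (Fin (n+1)) :=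
  (shiftCycle p).trans (extPerm σ)

lemma insPerm_lt {n : ℕ} (σ : Equiv.Perm (Fin n)) (p i : Fin (n+1)) (h : i < p) :
    insPerm σ p i = (σ ⟨i.val, by have := p.isLt; have := Fin.lt_def.mp h; omega⟩).castSucc := by
  have hv : i.val < n := by have := p.isLt; have := Fin.lt_def.mp h; omega
  rw [insPerm, Equiv.trans_apply, shiftCycle_lt p i h]
  have heq : i = (⟨i.val, hv⟩ : Fin n).castSucc := by apply Fin.ext; simp
  conv_lhs => rw [heq]
  rw [extPerm_castSucc]

lemma insPerm_self {n : ℕ} (σ : Equiv.Perm (Fin n)) (p : Fin (n+1)) :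
    insPerm σ p p = Fin.last n := by
  rw [insPerm, Equiv.trans_apply, shiftCycle_self, extPerm_last]

lemma insPerm_gt {n : ℕ} (σ : Equiv.Perm (Fin n)) (p i : Fin (n+1)) (h : p < i) :
    insPerm σ p i = (σ ⟨i.val - 1, by have := i.isLt; omega⟩).castSucc := by
  have hv : i.val - 1 < n := by have := i.isLt; have := Fin.lt_def.mp h; omega
  rw [insPerm, Equiv.trans_apply, shiftCycle_gt p i h]
  have heq : (⟨i.val - 1, by omega⟩ : Fin (n+1)) = (⟨i.val - 1, hv⟩ : Fin n).castSucc := by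
    apply Fin.ext; simp
  conv_lhs => rw [heq]
  rw [extPerm_castSucc]

def ins {n : ℕ} (π : SignedPerm n) (p : Fin (n+1)) (s : Bool) : SignedPerm (n+1) :=
  (insPerm π.1 p, fun i => Fin.lastCases s π.2 (shiftCycle p i))

lemma bval_ins_le {n : ℕ} (π : SignedPerm n) (p : Fin (n+1)) (s : Bool) (i : ℕ)
    (h1 : 1 ≤ i) (h2 : i ≤ p.val) : bval (ins π p s) i = bval π i := by
  have hp := p.isLt
  have hin : i ≤ n := by omega
  have hlt : (⟨i - 1, by omega⟩ : Fin (n+1)) < p := by simp [Fin.lt_def]; omega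
  have hn : i - 1 < n := by omega
  rw [bval, bval, dif_pos ⟨h1, by omega⟩, dif_pos ⟨h1, hin⟩]
  have hperm : (ins π p s).1 ⟨i - 1, by omega⟩ = (π.1 ⟨i - 1, hn⟩).castSucc := by
    show insPerm π.1 p _ = _
    rw [insPerm_lt _ _ _ hlt]
  have hsign : (ins π p s).2 ⟨i - 1, by omega⟩ = π.2 ⟨i - 1, hn⟩ := by
    show (Fin.lastCases (motive := fun _ => Bool) s π.2 (shiftCycle p _)) = _
    rw [shiftCycle_lt _ _ hlt]
    have : (⟨i - 1, by omega⟩ : Fin (n+1)) = (⟨i - 1, hn⟩ : Fin n).castSucc := by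
      apply Fin.ext; simp
    rw [this, Fin.lastCases_castSucc]
  rw [hperm, hsign]
  simp [Fin.coe_castSucc]

lemma bval_ins_self {n : ℕ} (π : SignedPerm n) (p : Fin (n+1)) (s : Bool) :
    bval (ins π p s) (p.val + 1) = if s then -((n:ℤ)+1) else (n:ℤ)+1 := by
  have hp := p.isLt
  rw [bval, dif_pos ⟨by omega, by omega⟩]
  have hip : (⟨p.val + 1 - 1, by omega⟩ : Fin (n+1)) = p := by apply Fin.ext; simp
  have hperm : (ins π p s).1 ⟨p.val + 1 - 1, by omega⟩ = Fin.last n := by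
    show insPerm π.1 p _ = _
    rw [hip, insPerm_self]
  have hsign : (ins π p s).2 ⟨p.val + 1 - 1, by omega⟩ = s := by
    show (Fin.lastCases (motive := fun _ => Bool) s π.2 (shiftCycle p _)) = _
    rw [hip, shiftCycle_self, Fin.lastCases_last]
  rw [hperm, hsign]
  simp [Fin.last]

set_option maxHeartbeats 1000000 in
lemma bval_ins_gt {n : ℕ} (π : SignedPerm n) (p : Fin (n+1)) (s : Bool) (i : ℕ)
    (h1 : p.val + 2 ≤ i) (h2 : i ≤ n + 1) : bval (ins π p s) i = bval π (i - 1) := by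
  have hp := p.isLt
  have hgt : p < (⟨i - 1, by omega⟩ : Fin (n+1)) := by simp [Fin.lt_def]; omega
  have hn : i - 1 - 1 < n := by omega
  rw [bval, bval, dif_pos ⟨by omega, by omega⟩, dif_pos ⟨by omega, by omega⟩]
  have hperm : (ins π p s).1 ⟨i - 1, by omega⟩ = (π.1 ⟨i - 1 - 1, hn⟩).castSucc := by
    show insPerm π.1 p _ = _
    rw [insPerm_gt _ _ _ hgt]
  have hsign : (ins π p s).2 ⟨i - 1, by omega⟩ = π.2 ⟨i - 1 - 1, hn⟩ := by
    show (Fin.lastCases (motive := fun _ => Bool) s π.2 (shiftCycle p _)) = _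
    rw [shiftCycle_gt _ _ hgt]
    have : (⟨(⟨i - 1, by omega⟩ : Fin (n+1)).val - 1, by omega⟩ : Fin (n+1)) =
        (⟨i - 1 - 1, hn⟩ : Fin n).castSucc := by apply Fin.ext; simp
    rw [this, Fin.lastCases_castSucc]
  rw [hperm, hsign]
  simp [Fin.coe_castSucc]

lemma bval_lt {n : ℕ} (π : SignedPerm n) (i : ℕ) :
    -((n:ℤ)+1) < bval π i ∧ bval π i < (n:ℤ)+1 := by
  rw [bval]
  by_cases h : 1 ≤ i ∧ i ≤ n
  · rw [dif_pos h]
    have hv := (π.1 ⟨i - 1, by omega⟩).isLt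
    split_ifs <;> constructor <;> push_cast <;> omega
  · rw [dif_neg h]
    constructor <;> push_cast <;> omega

/-- The condition under which insertion does not create a new type-A descent. -/
def insKeep {n : ℕ} (π : SignedPerm n) (p : Fin (n+1)) (s : Bool) : Prop :=
  (if s then p.val = 0 else p.val = n) ∨
    (1 ≤ p.val ∧ p.val ≤ n - 1 ∧ bval π (p.val+1) < bval π p.val)

instance {n : ℕ} (π : SignedPerm n) (p : Fin (n+1)) (s : Bool) :
    Decidable (insKeep π p s) := by unfold insKeep; infer_instance

lemma desA_eq_sum {n : ℕ} (π : SignedPerm n) :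
    desA π = ∑ i ∈ Finset.Ioc 0 (n-1), (if bval π (i+1) < bval π i then 1 else 0) := by
  rw [desA, Finset.card_filter, ← Finset.Icc_add_one_left_eq_Ioc, zero_add]

lemma desA_ins {n : ℕ} (π : SignedPerm n) (p : Fin (n+1)) (s : Bool) :
    desA (ins π p s) = desA π + (if insKeep π p s then 0 else 1) := by
  classical
  set a := p.val with hav
  have ha : a ≤ n := by have := p.isLt; omega
  set f : ℕ → ℕ := fun i => if bval π (i+1) < bval π i then 1 else 0 with hf
  set g : ℕ → ℕ := fun i => if bval (ins π p s) (i+1) < bval (ins π p s) i then 1 else 0 with hg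
  have hd : desA π = ∑ i ∈ Finset.Ioc 0 (n-1), f i := desA_eq_sum π
  have hd' : desA (ins π p s) = ∑ i ∈ Finset.Ioc 0 n, g i := by
    have h := desA_eq_sum (ins π p s)
    simpa only [Nat.add_sub_cancel] using h
  -- pointwise values of g
  have hg1 : ∀ i, 1 ≤ i → i + 1 ≤ a → g i = f i := by
    intro i hi1 hi2
    simp only [hg, hf]
    rw [bval_ins_le π p s (i+1) (by omega) hi2, bval_ins_le π p s i hi1 (by omega)]
  have hg2 : 1 ≤ a → g a = (if s then 1 else 0) := by
    intro h1
    simp only [hg]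
    rw [bval_ins_self π p s, bval_ins_le π p s a h1 le_rfl]
    have hb := bval_lt π a
    cases s with
    | true => simp only [if_true]; rw [if_pos hb.1]
    | false => simp only [if_false, Bool.false_eq_true]; rw [if_neg (by omega)]
  have hg3 : a + 1 ≤ n → g (a+1) = (if s then 0 else 1) := by
    intro h1
    simp only [hg]
    have h2 : bval (ins π p s) (a + 1 + 1) = bval π (a+1) := by
      have := bval_ins_gt π p s (a+2) (by omega) (by omega)
      simpa using this
    rw [h2, bval_ins_self π p s]
    have hb := bval_lt π (a+1)
    cases s with
    | true => simp only [if_true]; rw [if_neg (by omega)]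
    | false => simp only [if_false, Bool.false_eq_true]; rw [if_pos hb.2]
  have hg4 : ∀ i, a + 2 ≤ i → i ≤ n → g i = if bval π i < bval π (i-1) then 1 else 0 := by
    intro i h1 h2
    simp only [hg]
    rw [bval_ins_gt π p s i (by omega) (by omega),
      bval_ins_gt π p s (i+1) (by omega) (by omega)]
    simp only [Nat.add_sub_cancel]
  -- split the sum
  have hsplit : ∑ i ∈ Finset.Ioc 0 n, g i
      = (∑ i ∈ Finset.Ioc 0 a, g i) + ∑ i ∈ Finset.Ioc a n, g i := by
    rw [Finset.sum_Ioc_consecutive _ (Nat.zero_le a) ha]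
  have htail : a < n → ∑ i ∈ Finset.Ioc a n, g i = g (a+1) + ∑ i ∈ Finset.Ioc a (n-1), f i := by
    intro han
    have h1 : Finset.Ioc a (a+1) = {a+1} := Nat.Ioc_succ_singleton a
    rw [← Finset.sum_Ioc_consecutive _ (Nat.le_succ a) (by omega : a + 1 ≤ n), h1,
      Finset.sum_singleton]
    congr 1
    have hmap : (Finset.Ioc a (n-1)).map (addRightEmbedding 1) = Finset.Ioc (a+1) n := by
      rw [Finset.map_add_right_Ioc]
      congr 1
      omega
    rw [← hmap, Finset.sum_map]
    apply Finset.sum_congr rfl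
    intro j hj
    simp only [Finset.mem_Ioc] at hj
    simp only [addRightEmbedding_apply]
    rw [hg4 (j+1) (by omega) (by omega)]
    simp only [Nat.add_sub_cancel, hf]
  have hhead : 1 ≤ a → ∑ i ∈ Finset.Ioc 0 a, g i = (∑ i ∈ Finset.Ioc 0 (a-1), f i) + g a := by
    intro h1
    have h2 : Finset.Ioc (a-1) a = {a} := by ext x; simp; omega
    rw [← Finset.sum_Ioc_consecutive _ (Nat.zero_le (a-1)) (by omega : a - 1 ≤ a), h2,
      Finset.sum_singleton]
    congr 1
    apply Finset.sum_congr rfl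
    intro j hj
    simp only [Finset.mem_Ioc] at hj
    exact hg1 j (by omega) (by omega)
  -- now case analysis
  rcases Nat.eq_zero_or_pos a with ha0 | ha1
  · -- a = 0
    rcases Nat.lt_or_ge a n with han | han
    · -- a = 0 < n
      rw [hd', hsplit, htail han]
      have h0 : Finset.Ioc 0 a = ∅ := by rw [ha0]; simp
      rw [h0, Finset.sum_empty, hg3 (by omega), hd]
      have hia : Finset.Ioc a (n-1) = Finset.Ioc 0 (n-1) := by rw [ha0]
      rw [hia]
      have hcond : insKeep π p s ↔ s = true := by
        unfold insKeep
        cases s <;> simp [hav, -Fin.val_eq_zero_iff] <;> omega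
      cases s with
      | true => rw [if_pos (hcond.mpr rfl)]; simp
      | false =>
        have hnk : ¬ insKeep π p false := by rw [hcond]; simp
        rw [if_neg hnk]; simp; omega
    · -- a = 0 = n
      have hn0 : n = 0 := by omega
      have hcond : insKeep π p s := by
        unfold insKeep; cases s <;> simp [hav, -Fin.val_eq_zero_iff] <;> omega
      rw [hd', hsplit, hd, if_pos hcond]
      have h0 : Finset.Ioc 0 a = ∅ := by rw [ha0]; simp
      have h1 : Finset.Ioc a n = ∅ := by rw [ha0, hn0]; simp
      rw [h0, h1, hn0]
      simp
  · rcases Nat.lt_or_ge a n with han | han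
    · -- 1 ≤ a < n
      rw [hd', hsplit, htail han, hhead ha1, hg2 ha1, hg3 (by omega)]
      have hdd : desA π = (∑ i ∈ Finset.Ioc 0 (a-1), f i) + (f a + ∑ i ∈ Finset.Ioc a (n-1), f i) := by
        rw [hd, ← Finset.sum_Ioc_consecutive _ (Nat.zero_le (a-1)) (by omega : a - 1 ≤ n - 1)]
        congr 1
        have h2 : Finset.Ioc (a-1) a = {a} := by ext x; simp; omega
        rw [← Finset.sum_Ioc_consecutive _ (by omega : a - 1 ≤ a) (by omega : a ≤ n - 1), h2,
          Finset.sum_singleton]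
      have hcond : insKeep π p s ↔ bval π (a+1) < bval π a := by
        unfold insKeep
        cases s <;> simp [hav, -Fin.val_eq_zero_iff] <;> omega
      have e1 : (if s = true then (1:ℕ) else 0) + (if s = true then (0:ℕ) else 1) = 1 := by
        cases s <;> simp
      by_cases hdsc : bval π (a+1) < bval π a
      · have hfa : f a = 1 := by simp only [hf]; rw [if_pos hdsc]
        rw [if_pos (hcond.mpr hdsc), hdd, hfa]
        omega
      · have hfa : f a = 0 := by simp only [hf]; rw [if_neg hdsc]
        have hnk : ¬ insKeep π p s := by rw [hcond]; exact hdsc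
        rw [if_neg hnk, hdd, hfa]
        omega
    · -- a = n ≥ 1
      have hann : a = n := by omega
      rw [hd', hsplit, hhead ha1, hg2 ha1, hd]
      have hB : Finset.Ioc a n = ∅ := by rw [hann]; simp
      rw [hB, Finset.sum_empty]
      have hiocc : Finset.Ioc 0 (n-1) = Finset.Ioc 0 (a-1) := by rw [hann]
      rw [hiocc]
      have hcond : insKeep π p s ↔ s = false := by
        unfold insKeep
        cases s <;> simp [hav, -Fin.val_eq_zero_iff] <;> omega
      cases s with
      | true =>
        have hnk : ¬ insKeep π p true := by rw [hcond]; simp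
        rw [if_neg hnk]; simp
      | false =>
        rw [if_pos (hcond.mpr rfl)]; simp

lemma ins_snd_lt {n : ℕ} (π : SignedPerm n) (p : Fin (n+1)) (s : Bool) (i : Fin (n+1))
    (h : i < p) : (ins π p s).2 i = π.2 ⟨i.val, by have := p.isLt; have := Fin.lt_def.mp h; omega⟩ := by
  show (Fin.lastCases (motive := fun _ => Bool) s π.2 (shiftCycle p i)) = _
  rw [shiftCycle_lt p i h]
  have hv : i.val < n := by have := p.isLt; have := Fin.lt_def.mp h; omega
  have heq : i = (⟨i.val, hv⟩ : Fin n).castSucc := by apply Fin.ext; simp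
  conv_lhs => rw [heq]
  rw [Fin.lastCases_castSucc]

lemma ins_snd_self {n : ℕ} (π : SignedPerm n) (p : Fin (n+1)) (s : Bool) :
    (ins π p s).2 p = s := by
  show (Fin.lastCases (motive := fun _ => Bool) s π.2 (shiftCycle p p)) = _
  rw [shiftCycle_self, Fin.lastCases_last]

lemma ins_snd_gt {n : ℕ} (π : SignedPerm n) (p : Fin (n+1)) (s : Bool) (i : Fin (n+1))
    (h : p < i) : (ins π p s).2 i = π.2 ⟨i.val - 1, by have := i.isLt; have := Fin.lt_def.mp h; omega⟩ := by
  show (Fin.lastCases (motive := fun _ => Bool) s π.2 (shiftCycle p i)) = _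
  rw [shiftCycle_gt p i h]
  have hv : i.val - 1 < n := by have := i.isLt; have := Fin.lt_def.mp h; omega
  have heq : (⟨i.val - 1, by omega⟩ : Fin (n+1)) = (⟨i.val - 1, hv⟩ : Fin n).castSucc := by
    apply Fin.ext; simp
  conv_lhs => rw [heq]
  rw [Fin.lastCases_castSucc]

lemma ins_injective {n : ℕ} :
    Function.Injective (fun x : SignedPerm n × Fin (n+1) × Bool => ins x.1 x.2.1 x.2.2) := by
  rintro ⟨π, p, s⟩ ⟨π', p', s'⟩ h
  simp only at h
  have hp : p = p' := by
    by_contra hne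
    have h1 : (ins π p s).1 p = Fin.last n := insPerm_self π.1 p
    have h2 : (ins π' p' s').1 p ≠ Fin.last n := by
      rcases lt_or_gt_of_ne hne with hlt | hgt
      · have e : (ins π' p' s').1 p = _ := insPerm_lt π'.1 p' p hlt
        rw [e]
        intro hc
        have h3 := congrArg Fin.val hc
        simp only [Fin.coe_castSucc, Fin.val_last] at h3
        exact absurd h3 (Nat.ne_of_lt (π'.1 _).isLt)
      · have e : (ins π' p' s').1 p = _ := insPerm_gt π'.1 p' p hgt
        rw [e]
        intro hc
        have h3 := congrArg Fin.val hc
        simp only [Fin.coe_castSucc, Fin.val_last] at h3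
        exact absurd h3 (Nat.ne_of_lt (π'.1 _).isLt)
    rw [h] at h1
    exact h2 h1
  subst hp
  have hs : s = s' := by
    have h1 := ins_snd_self π p s
    rw [h] at h1
    exact ((ins_snd_self π' p s').symm.trans h1).symm
  subst hs
  have hfst : (ins π p s).1 = (ins π' p s).1 := by rw [h]
  have hsnd : (ins π p s).2 = (ins π' p s).2 := by rw [h]
  have hperm : π.1 = π'.1 := by
    apply Equiv.ext
    intro i
    by_cases hip : i.val < p.val
    · have hlt : (i.castSucc : Fin (n+1)) < p := by simp [Fin.lt_def]; omega
      have hval : insPerm π.1 p i.castSucc = insPerm π'.1 p i.castSucc :=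
        DFunLike.congr_fun hfst i.castSucc
      rw [insPerm_lt π.1 p i.castSucc hlt, insPerm_lt π'.1 p i.castSucc hlt] at hval
      simpa using hval
    · have hgt : p < (i.succ : Fin (n+1)) := by simp [Fin.lt_def]; omega
      have hval : insPerm π.1 p i.succ = insPerm π'.1 p i.succ :=
        DFunLike.congr_fun hfst i.succ
      rw [insPerm_gt π.1 p i.succ hgt, insPerm_gt π'.1 p i.succ hgt] at hval
      simpa using hval
  have hsign : π.2 = π'.2 := by
    funext i
    by_cases hip : i.val < p.val
    · have hlt : (i.castSucc : Fin (n+1)) < p := by simp [Fin.lt_def]; omega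
      have hval : (ins π p s).2 i.castSucc = (ins π' p s).2 i.castSucc := congrFun hsnd _
      rw [ins_snd_lt π p s i.castSucc hlt, ins_snd_lt π' p s i.castSucc hlt] at hval
      simpa using hval
    · have hgt : p < (i.succ : Fin (n+1)) := by simp [Fin.lt_def]; omega
      have hval : (ins π p s).2 i.succ = (ins π' p s).2 i.succ := congrFun hsnd _
      rw [ins_snd_gt π p s i.succ hgt, ins_snd_gt π' p s i.succ hgt] at hval
      simpa using hval
  have : π = π' := Prod.ext hperm hsign
  rw [this]

lemma ins_bijective {n : ℕ} :
    Function.Bijective (fun x : SignedPerm n × Fin (n+1) × Bool => ins x.1 x.2.1 x.2.2) := by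
  rw [Fintype.bijective_iff_injective_and_card]
  refine ⟨ins_injective, ?_⟩
  simp only [Fintype.card_prod, Fintype.card_perm, Fintype.card_fun, Fintype.card_bool,
    Fintype.card_fin]
  rw [Nat.factorial_succ]
  ring

lemma desA_le {n : ℕ} (π : SignedPerm n) : desA π ≤ n - 1 := by
  have h := Finset.card_filter_le (Finset.Icc 1 (n-1)) (fun i => bval π (i+1) < bval π i)
  rwa [Nat.card_Icc, Nat.add_sub_cancel] at h

lemma card_insKeep {n : ℕ} (π : SignedPerm n) :
    ((Finset.univ : Finset (Fin (n+1) × Bool)).filter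
      (fun ps => insKeep π ps.1 ps.2)).card = 2 * desA π + 2 := by
  classical
  have hdsc : ∀ s : Bool, (Finset.univ.filter (fun p : Fin (n+1) =>
      1 ≤ p.val ∧ p.val ≤ n - 1 ∧ bval π (p.val+1) < bval π p.val)).card = desA π := by
    intro _
    rw [desA]
    apply Finset.card_bij (fun p _ => p.val)
    · intro p hp
      simp only [Finset.mem_filter, Finset.mem_univ, true_and] at hp
      simp only [Finset.mem_filter, Finset.mem_Icc]
      exact ⟨⟨hp.1, hp.2.1⟩, hp.2.2⟩
    · intro p hp q hq hpq
      exact Fin.ext hpq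
    · intro i hi
      simp only [Finset.mem_filter, Finset.mem_Icc] at hi
      refine ⟨⟨i, by omega⟩, ?_, rfl⟩
      simp only [Finset.mem_filter, Finset.mem_univ, true_and]
      exact ⟨hi.1.1, hi.1.2, hi.2⟩
  have key : ∀ s : Bool, (Finset.univ.filter (fun p : Fin (n+1) => insKeep π p s)).card
      = desA π + 1 := by
    intro s
    have hsplit : (Finset.univ.filter (fun p : Fin (n+1) => insKeep π p s))
        = (Finset.univ.filter (fun p : Fin (n+1) => (if s then p.val = 0 else p.val = n)))
          ∪ (Finset.univ.filter (fun p : Fin (n+1) =>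
              1 ≤ p.val ∧ p.val ≤ n - 1 ∧ bval π (p.val+1) < bval π p.val)) := by
      rw [← Finset.filter_or]
      apply Finset.filter_congr
      intro p _
      rw [insKeep]
    rw [hsplit, Finset.card_union_of_disjoint, hdsc s]
    · have hone : (Finset.univ.filter (fun p : Fin (n+1) =>
          (if s then p.val = 0 else p.val = n))).card = 1 := by
        cases s with
        | true =>
          have : (Finset.univ.filter (fun p : Fin (n+1) => (if true then p.val = 0 else p.val = n)))
              = {(0 : Fin (n+1))} := by
            ext p; simp [Fin.ext_iff, -Fin.val_eq_zero_iff]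
          rw [this, Finset.card_singleton]
        | false =>
          have : (Finset.univ.filter (fun p : Fin (n+1) => (if false then p.val = 0 else p.val = n)))
              = {(Fin.last n)} := by
            ext p; simp [Fin.ext_iff, Fin.val_last]
          rw [this, Finset.card_singleton]
      rw [hone]; ring
    · rw [Finset.disjoint_filter]
      intro p _ hp
      cases s <;> simp [-Fin.val_eq_zero_iff] at hp ⊢ <;> omega
  -- combine the two sign classes
  have hprod : ((Finset.univ : Finset (Fin (n+1) × Bool)).filter
      (fun ps => insKeep π ps.1 ps.2)).card
      = ∑ s : Bool, (Finset.univ.filter (fun p : Fin (n+1) => insKeep π p s)).card := by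
    rw [Finset.card_filter]
    simp only [Finset.card_filter]
    rw [Fintype.sum_prod_type, Finset.sum_comm]
  rw [hprod]
  simp only [key]
  simp [Fintype.sum_bool]
  ring

lemma master_sum {M : Type*} [AddCommMonoid M] {n : ℕ} (F : ℕ → M) :
    ∑ π' : SignedPerm (n+1), F (desA π') =
      ∑ π : SignedPerm n,
        ((2 * desA π + 2) • F (desA π) + (2*n - 2*desA π) • F (desA π + 1)) := by
  classical
  rw [← Fintype.sum_bijective _ ins_bijective
    (fun x : SignedPerm n × Fin (n+1) × Bool => F (desA (ins x.1 x.2.1 x.2.2)))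
    (fun π' => F (desA π')) (fun x => rfl)]
  rw [Fintype.sum_prod_type]
  apply Finset.sum_congr rfl
  intro π _
  have hpt : ∀ y : Fin (n+1) × Bool, F (desA (ins π y.1 y.2))
      = if insKeep π y.1 y.2 then F (desA π) else F (desA π + 1) := by
    intro y
    rw [desA_ins]
    split_ifs <;> simp
  rw [Finset.sum_congr rfl (fun y _ => hpt y), Finset.sum_ite, Finset.sum_const,
    Finset.sum_const, card_insKeep]
  congr 2
  have hcards := Finset.card_filter_add_card_filter_not
    (s := (Finset.univ : Finset (Fin (n+1) × Bool))) (p := fun ps => insKeep π ps.1 ps.2)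
  rw [card_insKeep] at hcards
  have huniv : (Finset.univ : Finset (Fin (n+1) × Bool)).card = (n+1) * 2 := by
    simp [Finset.card_univ]
  rw [huniv] at hcards
  have hdle : desA π ≤ n - 1 := desA_le π
  omega

open MvPolynomial in
lemma Dmono (D : Derivation ℚ (MvPolynomial (Fin 3) ℚ) (MvPolynomial (Fin 3) ℚ))
    (hy : D (X 1) = X 1 * X 2 ^ 2) (hz : D (X 2) = X 1 ^ 2 * X 2) (a b : ℕ) :
    D (X 1 ^ a * X 2 ^ b) = a • (X 1 ^ a * X 2 ^ (b+2)) + b • (X 1 ^ (a+2) * X 2 ^ b) := by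
  rw [Derivation.leibniz, Derivation.leibniz_pow, Derivation.leibniz_pow, hy, hz]
  cases a <;> cases b <;>
    simp only [smul_eq_mul, nsmul_eq_mul, Nat.succ_sub_one, Nat.cast_zero, pow_zero,
      Nat.sub_zero, zero_mul, mul_zero, add_zero, zero_add, one_mul, mul_one] <;>
    push_cast <;> ring


open MvPolynomial in
theorem statement_1
    (D : Derivation ℚ (MvPolynomial (Fin 3) ℚ) (MvPolynomial (Fin 3) ℚ))
    (hx : D (X 0) = X 0 * X 1 * X 2)
    (hy : D (X 1) = X 1 * X 2 ^ 2)
    (hz : D (X 2) = X 1 ^ 2 * X 2) (n : ℕ) :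
    (D.toLinearMap ^ n) (X 1 ^ 2) =
      X 1 ^ 2 * ∑ π : SignedPerm n, X 1 ^ (2 * desA π) * X 2 ^ (2 * n - 2 * desA π) := by
    induction n with
  | zero =>
    rw [pow_zero, Module.End.one_apply]
    have hsum : ∑ π : SignedPerm 0, (X 1 ^ (2 * desA π) * X 2 ^ (2 * 0 - 2 * desA π)
        : MvPolynomial (Fin 3) ℚ) = 1 := by
      have h0 : ∀ π : SignedPerm 0, (X 1 ^ (2 * desA π) * X 2 ^ (2 * 0 - 2 * desA π)
          : MvPolynomial (Fin 3) ℚ) = 1 := by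
        intro π
        have hd : desA π = 0 := by simp [desA]
        rw [hd]; simp
      rw [Finset.sum_congr rfl (fun π _ => h0 π), Finset.sum_const]
      have hc : Fintype.card (SignedPerm 0) = 1 := by
        simp [Fintype.card_prod, Fintype.card_perm, Fintype.card_fun]
      rw [Finset.card_univ, hc, one_smul]
    rw [hsum, mul_one]
  | succ n ih =>
    set F : ℕ → MvPolynomial (Fin 3) ℚ :=
      fun d => X 1 ^ 2 * (X 1 ^ (2*d) * X 2 ^ (2*(n+1) - 2*d)) with hF
    have step : ∀ π : SignedPerm n,
        D.toLinearMap (X 1 ^ 2 * (X 1 ^ (2 * desA π) * X 2 ^ (2*n - 2*desA π)))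
          = (2 * desA π + 2) • F (desA π) + (2*n - 2*desA π) • F (desA π + 1) := by
      intro π
      have hd : desA π ≤ n := le_trans (desA_le π) (Nat.sub_le n 1)
      have hmerge : (X 1 ^ 2 * (X 1 ^ (2 * desA π) * X 2 ^ (2*n - 2*desA π))
          : MvPolynomial (Fin 3) ℚ) = X 1 ^ (2 * desA π + 2) * X 2 ^ (2*n - 2*desA π) := by
        rw [pow_add]; ring
      rw [Derivation.coeFn_coe, hmerge, Dmono D hy hz]
      have e1 : 2*n - 2*desA π + 2 = 2*(n+1) - 2*desA π := by omega
      have e2 : 2*(n+1) - 2*(desA π + 1) = 2*n - 2*desA π := by omega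
      have hF1 : F (desA π) = X 1 ^ (2 * desA π + 2) * X 2 ^ (2*n - 2*desA π + 2) := by
        rw [hF]; dsimp only; rw [e1, pow_add]; ring
      have hF2 : F (desA π + 1) = X 1 ^ (2 * desA π + 2 + 2) * X 2 ^ (2*n - 2*desA π) := by
        rw [hF]; dsimp only; rw [e2, pow_add]
        have : 2 * (desA π + 1) = 2 * desA π + 2 := by ring
        rw [this, pow_add]; ring
      rw [hF1, hF2]
    calc (D.toLinearMap ^ (n+1)) (X 1 ^ 2)
        = D.toLinearMap ((D.toLinearMap ^ n) (X 1 ^ 2)) := by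
          rw [pow_succ', Module.End.mul_apply]
      _ = D.toLinearMap (∑ π : SignedPerm n,
            X 1 ^ 2 * (X 1 ^ (2 * desA π) * X 2 ^ (2*n - 2*desA π))) := by
          rw [ih, Finset.mul_sum]
      _ = ∑ π : SignedPerm n, D.toLinearMap
            (X 1 ^ 2 * (X 1 ^ (2 * desA π) * X 2 ^ (2*n - 2*desA π))) := by
          rw [map_sum]
      _ = ∑ π : SignedPerm n,
            ((2 * desA π + 2) • F (desA π) + (2*n - 2*desA π) • F (desA π + 1)) := by
          exact Finset.sum_congr rfl (fun π _ => step π)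
      _ = ∑ π' : SignedPerm (n+1), F (desA π') := (master_sum F).symm
      _ = X 1 ^ 2 * ∑ π : SignedPerm (n+1),
            X 1 ^ (2 * desA π) * X 2 ^ (2 * (n+1) - 2 * desA π) := by
          rw [Finset.mul_sum]
end

section
/- Let D be the derivation of ℚ[x,y,z] with D(x)=xyz, D(y)=yz², D(z)=y²z. For every n ≥ 0, D^n(z) = z · Σ_{σ ∈ Q_n} y^{2·lap(σ)} z^{2n − 2·lap(σ)}, an identity in ℚ[x,y,z]. -/
open Finset MvPolynomial

/-- Stirling permutations of order `n`, encoded as functions `Fin (2*n) → Fin (n+1)`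
in one-line notation (position `i` holds the letter `σ (i) ∈ {1,…,n}`), such that each
letter `1,…,n` occurs exactly twice and all entries between the two occurrences of a
letter are larger than that letter. -/
def StirlingSet (n : ℕ) : Finset (Fin (2*n) → Fin (n+1)) :=
  Finset.univ.filter (fun σ =>
    (∀ v : Fin (n+1), (v : ℕ) ≠ 0 →
        (Finset.univ.filter (fun i => σ i = v)).card = 2) ∧
    (∀ i j k : Fin (2*n), i < j → j < k → σ i = σ k → σ i < σ j))

/-- The letter at position `i ∈ {1,…,2n}` of a Stirling permutation, with the
convention that positions outside this range (in particular position `0`) hold `0`. -/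
def sval {n : ℕ} (σ : Fin (2*n) → Fin (n+1)) (i : ℕ) : ℕ :=
  if h : 1 ≤ i ∧ i ≤ 2*n then (σ ⟨i - 1, by omega⟩ : ℕ) else 0

/-- The number of ascent-plateaus: indices `2 ≤ i ≤ 2n-1` with `σ_{i-1} < σ_i = σ_{i+1}`. -/
def apQ {n : ℕ} (σ : Fin (2*n) → Fin (n+1)) : ℕ :=
  ((Finset.Icc 2 (2*n - 1)).filter
    (fun i => sval σ (i-1) < sval σ i ∧ sval σ i = sval σ (i+1))).card

/-- The number of left ascent-plateaus: indices `1 ≤ i ≤ 2n-1` with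
`σ_{i-1} < σ_i = σ_{i+1}`, where `σ_0 = 0`. -/
def lapQ {n : ℕ} (σ : Fin (2*n) → Fin (n+1)) : ℕ :=
  ((Finset.Icc 1 (2*n - 1)).filter
    (fun i => sval σ (i-1) < sval σ i ∧ sval σ i = sval σ (i+1))).card

/-- The number of double ascents: indices `1 ≤ i ≤ 2n-1` with
`σ_{i-1} < σ_i < σ_{i+1}`, where `σ_0 = 0`. -/
def dascQ {n : ℕ} (σ : Fin (2*n) → Fin (n+1)) : ℕ :=
  ((Finset.Icc 1 (2*n - 1)).filter
    (fun i => sval σ (i-1) < sval σ i ∧ sval σ i < sval σ (i+1))).card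

/-- The number of descent-plateaus: indices `2 ≤ i ≤ 2n-1` with
`σ_{i-1} > σ_i = σ_{i+1}`. -/
def dpQ {n : ℕ} (σ : Fin (2*n) → Fin (n+1)) : ℕ :=
  ((Finset.Icc 2 (2*n - 1)).filter
    (fun i => sval σ i < sval σ (i-1) ∧ sval σ i = sval σ (i+1))).card

/-- The number of ascents: indices `1 ≤ i ≤ 2n-1` with `σ_i < σ_{i+1}` or `i = 1`. -/
def ascQ {n : ℕ} (σ : Fin (2*n) → Fin (n+1)) : ℕ :=
  ((Finset.Icc 1 (2*n - 1)).filter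
    (fun i => sval σ i < sval σ (i+1) ∨ i = 1)).card

/-- The number of plateaus: indices `1 ≤ i ≤ 2n-1` with `σ_i = σ_{i+1}`. -/
def platQ {n : ℕ} (σ : Fin (2*n) → Fin (n+1)) : ℕ :=
  ((Finset.Icc 1 (2*n - 1)).filter (fun i => sval σ i = sval σ (i+1))).card

/-- The flag ascent-plateau number: `2·ap(σ)+1` if `σ_1 = σ_2`, and `2·ap(σ)` otherwise. -/
def fapQ {n : ℕ} (σ : Fin (2*n) → Fin (n+1)) : ℕ :=
  if 1 ≤ n ∧ sval σ 1 = sval σ 2 then 2 * apQ σ + 1 else 2 * apQ σ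

-- basics
lemma mem_stirling {n : ℕ} {σ : Fin (2*n) → Fin (n+1)} :
    σ ∈ StirlingSet n ↔
    (∀ v : Fin (n+1), (v : ℕ) ≠ 0 →
        (Finset.univ.filter (fun i => σ i = v)).card = 2) ∧
    (∀ i j k : Fin (2*n), i < j → j < k → σ i = σ k → σ i < σ j) := by
  simp [StirlingSet]

lemma sval_le {n : ℕ} (σ : Fin (2*n) → Fin (n+1)) (i : ℕ) : sval σ i ≤ n := by
  unfold sval
  split
  · exact Nat.lt_succ_iff.mp (Fin.isLt _)
  · omega

lemma sval_zero {n : ℕ} (σ : Fin (2*n) → Fin (n+1)) : sval σ 0 = 0 := by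
  simp [sval]

lemma sval_of_gt {n : ℕ} (σ : Fin (2*n) → Fin (n+1)) {i : ℕ} (h : 2*n < i) :
    sval σ i = 0 := by
  unfold sval; rw [dif_neg]; omega

lemma sval_of_mem {n : ℕ} (σ : Fin (2*n) → Fin (n+1)) {i : ℕ} (h1 : 1 ≤ i) (h2 : i ≤ 2*n) :
    sval σ i = (σ ⟨i - 1, by omega⟩ : ℕ) := by
  unfold sval; rw [dif_pos ⟨h1, h2⟩]

-- no value occurs at three positions
lemma three_occ {n : ℕ} {σ : Fin (2*n) → Fin (n+1)} (hσ : σ ∈ StirlingSet n)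
    {a b c : ℕ} (hab : a < b) (hbc : b < c)
    (h1 : sval σ a = sval σ b) (h2 : sval σ b = sval σ c) (hv : sval σ a ≠ 0) : False := by
  have ha : 1 ≤ a ∧ a ≤ 2*n := by
    by_contra h; rw [sval, dif_neg h] at hv; exact hv rfl
  have hc : 1 ≤ c ∧ c ≤ 2*n := by
    constructor
    · omega
    · by_contra h
      rw [sval_of_gt σ (show 2*n < c by omega)] at h2; omega
  have hb : 1 ≤ b ∧ b ≤ 2*n := ⟨by omega, by omega⟩
  rw [sval_of_mem σ ha.1 ha.2] at h1 hv
  rw [sval_of_mem σ hb.1 hb.2] at h1 h2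
  rw [sval_of_mem σ hc.1 hc.2] at h2
  set A : Fin (2*n) := ⟨a-1, by omega⟩
  set B : Fin (2*n) := ⟨b-1, by omega⟩
  set C : Fin (2*n) := ⟨c-1, by omega⟩
  set v : Fin (n+1) := σ A with hvdef
  have hcard := (mem_stirling.mp hσ).1 v hv
  have hsub : ({A, B, C} : Finset (Fin (2*n))) ⊆ Finset.univ.filter (fun i => σ i = v) := by
    intro x hx
    simp only [Finset.mem_insert, Finset.mem_singleton] at hx
    simp only [Finset.mem_filter, Finset.mem_univ, true_and]
    rcases hx with rfl | rfl | rfl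
    · rfl
    · exact (Fin.val_injective h1).symm
    · exact (Fin.val_injective (h1.trans h2)).symm
  have hAB : A ≠ B := by simp [A, B, Fin.ext_iff]; omega
  have hAC : A ≠ C := by simp [A, C, Fin.ext_iff]; omega
  have hBC : B ≠ C := by simp [B, C, Fin.ext_iff]; omega
  have h3 : ({A, B, C} : Finset (Fin (2*n))).card = 3 := by
    rw [Finset.card_insert_of_notMem (by simp [hAB, hAC]),
        Finset.card_insert_of_notMem (by simp [hBC]), Finset.card_singleton]
  have := Finset.card_le_card hsub
  omega

def IsLap {n : ℕ} (σ : Fin (2*n) → Fin (n+1)) (i : ℕ) : Prop :=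
  sval σ (i-1) < sval σ i ∧ sval σ i = sval σ (i+1)

instance {n : ℕ} (σ : Fin (2*n) → Fin (n+1)) (i : ℕ) : Decidable (IsLap σ i) := by
  unfold IsLap; infer_instance

lemma isLap_bounds {n : ℕ} {σ : Fin (2*n) → Fin (n+1)} {i : ℕ} (h : IsLap σ i) :
    1 ≤ i ∧ i + 1 ≤ 2*n := by
  obtain ⟨h1, h2⟩ := h
  constructor
  · by_contra hi
    have : i = 0 := by omega
    subst this
    simp [sval_zero] at h1
  · by_contra hi
    have hz : sval σ (i+1) = 0 := sval_of_gt σ (by omega)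
    rw [hz] at h2; omega

lemma lapQ_eq_card {n : ℕ} (σ : Fin (2*n) → Fin (n+1)) :
    lapQ σ = ((Finset.range (2*n + 2)).filter (IsLap σ)).card := by
  unfold lapQ
  congr 1
  apply Finset.ext
  intro i
  simp only [Finset.mem_filter, Finset.mem_Icc, Finset.mem_range]
  constructor
  · rintro ⟨hi, h⟩; exact ⟨by omega, h⟩
  · rintro ⟨hi, h⟩
    have := isLap_bounds h
    exact ⟨⟨this.1, by omega⟩, h⟩

lemma not_adjacent_lap {n : ℕ} {σ : Fin (2*n) → Fin (n+1)} (hσ : σ ∈ StirlingSet n)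
    {g : ℕ} (h1 : IsLap σ g) (h2 : IsLap σ (g+1)) : False := by
  refine three_occ hσ (a := g) (b := g+1) (c := g+2) (by omega) (by omega) h1.2 ?_ ?_
  · have := h2.2; simpa using this
  · intro h; have := h1.1; omega

lemma lapQ_le {n : ℕ} {σ : Fin (2*n) → Fin (n+1)} (hσ : σ ∈ StirlingSet n) :
    lapQ σ ≤ n := by
  rw [lapQ_eq_card]
  have : ((Finset.range (2*n + 2)).filter (IsLap σ)).card ≤ (Finset.Icc 1 n).card := by
    apply Finset.card_le_card_of_injOn (fun i => sval σ i)
    · intro i hi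
      simp only [Finset.coe_filter, Set.mem_setOf_eq, Finset.mem_coe, Finset.mem_filter, Finset.mem_range] at hi
      have hb := isLap_bounds hi.2
      have := hi.2.1
      simp only [Finset.coe_Icc, Set.mem_Icc, Finset.mem_coe, Finset.mem_Icc]
      exact ⟨by omega, sval_le σ i⟩
    · intro i hi j hj hij
      have hij' : sval σ i = sval σ j := hij
      simp only [Finset.coe_filter, Set.mem_setOf_eq, Finset.mem_range] at hi hj
      by_contra hne
      rcases Nat.lt_or_ge i j with hlt | hge
      · -- i < j, sval i = sval j, both laps
        rcases Nat.lt_or_ge (i+1) j with h2 | h2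
        · exact three_occ hσ (a := i) (b := i+1) (c := j)
            (by omega) h2 hi.2.2 (by rw [← hi.2.2, hij']) (by have := hi.2.1; omega)
        · have hj1 : j = i + 1 := by omega
          subst hj1
          exact not_adjacent_lap hσ hi.2 hj.2
      · have hlt : j < i := by omega
        rcases Nat.lt_or_ge (j+1) i with h2 | h2
        · exact three_occ hσ (a := j) (b := j+1) (c := i)
            (by omega) h2 hj.2.2 (by rw [← hj.2.2, hij'.symm]) (by have := hj.2.1; omega)
        · have : i = j + 1 := by omega
          subst this
          exact not_adjacent_lap hσ hj.2 hi.2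
  calc _ ≤ (Finset.Icc 1 n).card := this
    _ = n := by rw [Nat.card_Icc]; omega

def insStir (n : ℕ) (σ : Fin (2*n) → Fin (n+1)) (g : ℕ) : Fin (2*(n+1)) → Fin (n+2) :=
  fun i =>
    if h1 : (i : ℕ) < g ∧ (i : ℕ) < 2*n then (σ ⟨i, h1.2⟩).castSucc
    else if h2 : (i : ℕ) < g + 2 then Fin.last (n+1)
    else (σ ⟨(i : ℕ) - 2, by have := i.isLt; omega⟩).castSucc

lemma sval_ins {n : ℕ} (σ : Fin (2*n) → Fin (n+1)) {g : ℕ} (hg : g ≤ 2*n) (i : ℕ) :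
    sval (insStir n σ g) i =
      if i ≤ g then sval σ i
      else if i ≤ g + 2 then n + 1
      else sval σ (i - 2) := by
  rcases Nat.eq_zero_or_pos i with rfl | hi0
  · simp [sval_zero]
  rcases Nat.lt_or_ge (2*(n+1)) i with hbig | hle
  · rw [sval_of_gt _ hbig, if_neg (by omega), if_neg (by omega),
      sval_of_gt σ (show 2*n < i - 2 by omega)]
  · rw [sval_of_mem _ hi0 (by omega)]
    unfold insStir
    simp only [Fin.val_mk]
    rcases Nat.lt_or_ge (i-1) g with hlt | hge
    · rw [dif_pos ⟨hlt, by omega⟩, if_pos (by omega)]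
      rw [sval_of_mem σ hi0 (by omega)]
      simp
    · rcases Nat.lt_or_ge (i-1) (g+2) with h2 | h2
      · rw [dif_neg (by omega), dif_pos h2, if_neg (by omega), if_pos (by omega)]
        simp
      · rw [dif_neg (by omega), dif_neg (by omega), if_neg (by omega), if_neg (by omega)]
        rw [sval_of_mem σ (show 1 ≤ i - 2 by omega) (by omega)]
        simp only [Fin.coe_castSucc, show i-1-2 = i-2-1 from by omega]

lemma isLap_ins_iff {n : ℕ} (σ : Fin (2*n) → Fin (n+1)) {g : ℕ} (hg : g ≤ 2*n) (i : ℕ) :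
    IsLap (insStir n σ g) i ↔
      (i + 1 ≤ g ∧ IsLap σ i) ∨ (i = g + 1) ∨ (g + 4 ≤ i ∧ IsLap σ (i-2)) := by
  have hle : ∀ j, sval σ j ≤ n := sval_le σ
  unfold IsLap
  rw [sval_ins σ hg, sval_ins σ hg, sval_ins σ hg]
  rcases Nat.lt_or_ge i (g+1) with h1 | h1
  · -- i ≤ g
    rw [if_pos (by omega), if_pos (by omega)]
    rcases Nat.lt_or_ge i g with h2 | h2
    · -- i + 1 ≤ g
      rw [if_pos (by omega)]
      constructor
      · intro h; exact Or.inl ⟨by omega, h⟩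
      · rintro (⟨_, h⟩ | h | ⟨h, _⟩) <;> first | exact h | omega
    · -- i = g
      have : i = g := by omega
      subst this
      rw [if_neg (by omega), if_pos (by omega)]
      have := hle i
      constructor
      · intro h; omega
      · rintro (⟨h, _⟩ | h | ⟨h, _⟩) <;> omega
  · rcases Nat.lt_or_ge i (g+2) with h2 | h2
    · -- i = g+1
      have : i = g + 1 := by omega
      subst this
      rw [if_pos (by omega), if_neg (by omega), if_pos (by omega), if_neg (by omega),
        if_pos (by omega)]
      rw [show g+1-1 = g from by omega]
      have := hle g
      constructor
      · intro _; exact Or.inr (Or.inl rfl)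
      · intro _; omega
    · rcases Nat.lt_or_ge i (g+3) with h3 | h3
      · -- i = g+2
        have : i = g + 2 := by omega
        subst this
        rw [if_neg (by omega), if_pos (by omega), if_neg (by omega), if_pos (by omega)]
        constructor
        · intro h; omega
        · rintro (⟨h, _⟩ | h | ⟨h, _⟩) <;> omega
      · rcases Nat.lt_or_ge i (g+4) with h4 | h4
        · -- i = g+3
          have : i = g + 3 := by omega
          subst this
          rw [if_neg (by omega), if_pos (by omega), if_neg (by omega), if_neg (by omega),
            if_neg (by omega), if_neg (by omega)]
          rw [show g+3-2 = g+1 from by omega, show g+3+1-2 = g+2 from by omega]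
          have := hle (g+1)
          constructor
          · intro h; omega
          · rintro (⟨h, _⟩ | h | ⟨h, _⟩) <;> omega
        · -- i ≥ g + 4
          rw [if_neg (by omega), if_neg (by omega), if_neg (by omega), if_neg (by omega),
            if_neg (by omega), if_neg (by omega)]
          rw [show i - 1 - 2 = i - 2 - 1 from by omega, show i + 1 - 2 = i - 2 + 1 from by omega]
          constructor
          · intro h; exact Or.inr (Or.inr ⟨h4, h⟩)
          · rintro (⟨h, _⟩ | h | ⟨_, h⟩) <;> first | exact h | omega

lemma lapQ_ins {n : ℕ} {σ : Fin (2*n) → Fin (n+1)} (hσ : σ ∈ StirlingSet n)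
    {g : ℕ} (hg : g ≤ 2*n) :
    lapQ (insStir n σ g) + (if IsLap σ g ∨ IsLap σ (g+1) then 1 else 0) = lapQ σ + 1 := by
  classical
  set A : Finset ℕ := (Finset.range (2*n+2)).filter (IsLap σ) with hA
  set A1 : Finset ℕ := A.filter (fun i => i + 1 ≤ g) with hA1
  set A3 : Finset ℕ := A.filter (fun i => g + 2 ≤ i) with hA3
  set A2 : Finset ℕ := A.filter (fun i => ¬(i + 1 ≤ g) ∧ ¬(g + 2 ≤ i)) with hA2
  -- splitting A
  have hsplit : A.card = A1.card + A2.card + A3.card := by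
    have hu : A = A1 ∪ (A2 ∪ A3) := by
      apply Finset.ext; intro i
      simp only [hA1, hA2, hA3, Finset.mem_union, Finset.mem_filter]
      constructor
      · intro h
        by_cases hc : i + 1 ≤ g
        · exact Or.inl ⟨h, hc⟩
        · by_cases hc2 : g + 2 ≤ i
          · exact Or.inr (Or.inr ⟨h, hc2⟩)
          · exact Or.inr (Or.inl ⟨h, hc, hc2⟩)
      · rintro (⟨h, _⟩ | ⟨h, _⟩ | ⟨h, _⟩) <;> exact h
    have hd23 : Disjoint A2 A3 := by
      rw [Finset.disjoint_left]
      intro a ha hb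
      simp only [hA2, hA3, Finset.mem_filter] at ha hb
      omega
    have hd123 : Disjoint A1 (A2 ∪ A3) := by
      rw [Finset.disjoint_left]
      intro a ha hb
      simp only [hA1, hA2, hA3, Finset.mem_union, Finset.mem_filter] at ha hb
      omega
    rw [hu, Finset.card_union_of_disjoint hd123, Finset.card_union_of_disjoint hd23]
    ring
  -- middle part
  have hmid : A2.card = (if IsLap σ g ∨ IsLap σ (g+1) then 1 else 0) := by
    by_cases h1 : IsLap σ g
    · have h2 : ¬ IsLap σ (g+1) := fun h => not_adjacent_lap hσ h1 h
      rw [if_pos (Or.inl h1)]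
      have : A2 = {g} := by
        apply Finset.ext; intro i
        simp only [hA2, hA, Finset.mem_filter, Finset.mem_range, Finset.mem_singleton]
        constructor
        · rintro ⟨⟨_, hl⟩, hi1, hi2⟩
          have : i = g ∨ i = g + 1 := by omega
          rcases this with rfl | rfl
          · rfl
          · exact absurd hl h2
        · rintro rfl
          have hb := isLap_bounds h1
          exact ⟨⟨by omega, h1⟩, by omega, by omega⟩
      rw [this, Finset.card_singleton]
    · by_cases h2 : IsLap σ (g+1)
      · rw [if_pos (Or.inr h2)]
        have : A2 = {g+1} := by
          apply Finset.ext; intro i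
          simp only [hA2, hA, Finset.mem_filter, Finset.mem_range, Finset.mem_singleton]
          constructor
          · rintro ⟨⟨_, hl⟩, hi1, hi2⟩
            have : i = g ∨ i = g + 1 := by omega
            rcases this with rfl | rfl
            · exact absurd hl h1
            · rfl
          · rintro rfl
            have hb := isLap_bounds h2
            exact ⟨⟨by omega, h2⟩, by omega, by omega⟩
        rw [this, Finset.card_singleton]
      · rw [if_neg (by tauto)]
        have : A2 = ∅ := by
          apply Finset.eq_empty_of_forall_notMem; intro i
          simp only [hA2, hA, Finset.mem_filter, Finset.mem_range]
          rintro ⟨⟨_, hl⟩, hi1, hi2⟩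
          have : i = g ∨ i = g + 1 := by omega
          rcases this with rfl | rfl
          · exact h1 hl
          · exact h2 hl
        rw [this, Finset.card_empty]
  -- the inserted permutation's lap set
  have hB : (Finset.range (2*(n+1)+2)).filter (IsLap (insStir n σ g)) =
      (A1 ∪ {g+1}) ∪ A3.image (· + 2) := by
    apply Finset.ext; intro i
    simp only [hA1, hA3, hA, Finset.mem_union, Finset.mem_filter, Finset.mem_range,
      Finset.mem_singleton, Finset.mem_image]
    rw [isLap_ins_iff σ hg]
    constructor
    · rintro ⟨hi, hcase⟩
      rcases hcase with ⟨h, hl⟩ | h | ⟨h, hl⟩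
      · have hb := isLap_bounds hl
        exact Or.inl (Or.inl ⟨⟨by omega, hl⟩, h⟩)
      · exact Or.inl (Or.inr h)
      · have hb := isLap_bounds hl
        exact Or.inr ⟨i - 2, ⟨⟨by omega, hl⟩, by omega⟩, by omega⟩
    · rintro (⟨⟨⟨hr, hl⟩, hle'⟩ | rfl⟩ | ⟨j, ⟨⟨hr, hl⟩, hj⟩, rfl⟩)
      · exact ⟨by omega, Or.inl ⟨hle', hl⟩⟩
      · exact ⟨by omega, Or.inr (Or.inl rfl)⟩
      · refine ⟨by omega, Or.inr (Or.inr ⟨by omega, ?_⟩)⟩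
        rw [show j + 2 - 2 = j from by omega]
        exact hl
  -- cardinalities
  have hd1 : Disjoint A1 ({g+1} : Finset ℕ) := by
    rw [Finset.disjoint_singleton_right]
    simp only [hA1, Finset.mem_filter]
    rintro ⟨_, h⟩; omega
  have hd2 : Disjoint (A1 ∪ {g+1}) (A3.image (· + 2)) := by
    rw [Finset.disjoint_left]
    intro a ha hb
    simp only [Finset.mem_union, hA1, Finset.mem_filter, Finset.mem_singleton] at ha
    simp only [Finset.mem_image, hA3, Finset.mem_filter] at hb
    obtain ⟨j, ⟨_, hj⟩, rfl⟩ := hb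
    rcases ha with ⟨_, h⟩ | h <;> omega
  have himg : (A3.image (· + 2)).card = A3.card :=
    Finset.card_image_of_injective _ (fun a b h => by omega)
  have hlap1 : lapQ (insStir n σ g) = A1.card + 1 + A3.card := by
    rw [lapQ_eq_card, hB, Finset.card_union_of_disjoint hd2,
      Finset.card_union_of_disjoint hd1, Finset.card_singleton, himg]
  have hlap2 : lapQ σ = A.card := lapQ_eq_card σ
  omega

lemma card_glap {n : ℕ} {σ : Fin (2*n) → Fin (n+1)} (hσ : σ ∈ StirlingSet n) :
    ((Finset.range (2*n+1)).filter (fun g => IsLap σ g ∨ IsLap σ (g+1))).card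
      = 2 * lapQ σ := by
  classical
  set A : Finset ℕ := (Finset.range (2*n+2)).filter (IsLap σ) with hA
  have hu : (Finset.range (2*n+1)).filter (fun g => IsLap σ g ∨ IsLap σ (g+1))
      = A ∪ A.image (· - 1) := by
    apply Finset.ext; intro a
    simp only [hA, Finset.mem_union, Finset.mem_filter, Finset.mem_range, Finset.mem_image]
    constructor
    · rintro ⟨ha, h | h⟩
      · exact Or.inl ⟨by omega, h⟩
      · exact Or.inr ⟨a + 1, ⟨by omega, h⟩, by omega⟩
    · rintro (⟨_, h⟩ | ⟨j, ⟨_, hj⟩, rfl⟩)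
      · have hb := isLap_bounds h
        exact ⟨by omega, Or.inl h⟩
      · have hb := isLap_bounds hj
        refine ⟨by omega, Or.inr ?_⟩
        rw [show j - 1 + 1 = j from by omega]
        exact hj
  have hd : Disjoint A (A.image (· - 1)) := by
    rw [Finset.disjoint_left]
    intro a ha hb
    simp only [hA, Finset.mem_filter, Finset.mem_range, Finset.mem_image] at ha hb
    obtain ⟨j, ⟨_, hj⟩, rfl⟩ := hb
    have hb1 := isLap_bounds hj
    have : j - 1 + 1 = j := by omega
    exact not_adjacent_lap hσ ha.2 (by rw [this]; exact hj)
  have himg : (A.image (· - 1)).card = A.card := by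
    apply Finset.card_image_of_injOn
    intro a ha b hb h
    simp only [hA, Finset.coe_filter, Set.mem_setOf_eq] at ha hb
    have h1 := isLap_bounds ha.2
    have h2 := isLap_bounds hb.2
    simp only at h
    omega
  rw [hu, Finset.card_union_of_disjoint hd, himg, lapQ_eq_card, ← hA]
  ring

lemma ins_val_mid {n : ℕ} (σ : Fin (2*n) → Fin (n+1)) (g : ℕ) {i : Fin (2*(n+1))}
    (h1 : g ≤ (i : ℕ)) (h2 : (i : ℕ) < g + 2) : insStir n σ g i = Fin.last (n+1) := by
  unfold insStir
  rw [dif_neg (by omega), dif_pos h2]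

lemma ins_val_out {n : ℕ} (σ : Fin (2*n) → Fin (n+1)) {g : ℕ} (hg : g ≤ 2*n)
    {i : Fin (2*(n+1))} (h : (i : ℕ) < g ∨ g + 2 ≤ (i : ℕ)) :
    insStir n σ g i =
      (σ ⟨if (i : ℕ) < g then (i : ℕ) else (i : ℕ) - 2,
        by have := i.isLt; split <;> omega⟩).castSucc := by
  unfold insStir
  rcases h with h | h
  · rw [dif_pos ⟨h, by omega⟩]
    congr 1
    apply Fin.ext
    simp [h]
  · rw [dif_neg (by omega), dif_neg (by omega)]
    congr 1
    apply Fin.ext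
    simp [show ¬((i:ℕ) < g) from by omega]

lemma ins_ne_last {n : ℕ} (σ : Fin (2*n) → Fin (n+1)) {g : ℕ} (hg : g ≤ 2*n)
    {i : Fin (2*(n+1))} (h : (i : ℕ) < g ∨ g + 2 ≤ (i : ℕ)) :
    insStir n σ g i ≠ Fin.last (n+1) := by
  rw [ins_val_out σ hg h]
  exact Fin.ne_of_lt (Fin.castSucc_lt_last _)

lemma ins_eq_last_iff {n : ℕ} (σ : Fin (2*n) → Fin (n+1)) {g : ℕ} (hg : g ≤ 2*n)
    (i : Fin (2*(n+1))) :
    insStir n σ g i = Fin.last (n+1) ↔ (i : ℕ) = g ∨ (i : ℕ) = g + 1 := by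
  constructor
  · intro h
    by_contra hc
    push_neg at hc
    exact ins_ne_last σ hg (by omega) h
  · intro h
    exact ins_val_mid σ g (by omega) (by omega)

lemma ins_val_out2 {n : ℕ} (σ : Fin (2*n) → Fin (n+1)) {g : ℕ} (hg : g ≤ 2*n)
    {i : Fin (2*(n+1))} {b : Fin (2*n)}
    (h : ((i:ℕ) < g ∧ (b:ℕ) = (i:ℕ)) ∨ (g + 2 ≤ (i:ℕ) ∧ (b:ℕ) + 2 = (i:ℕ))) :
    insStir n σ g i = (σ b).castSucc := by
  have hXb : (⟨if (i:ℕ) < g then (i:ℕ) else (i:ℕ) - 2, by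
      have hb := b.isLt
      rcases h with ⟨h1, h2⟩ | ⟨h1, h2⟩
      · rw [if_pos h1]; omega
      · rw [if_neg (by omega)]; omega⟩ : Fin (2*n)) = b := by
    apply Fin.ext
    try simp only [Fin.val_mk]
    rcases h with ⟨h1, h2⟩ | ⟨h1, h2⟩
    · rw [if_pos h1]; omega
    · rw [if_neg (by omega)]; omega
  rw [ins_val_out σ hg (by rcases h with ⟨h1, _⟩ | ⟨h1, _⟩; exacts [Or.inl h1, Or.inr h1]), hXb]

lemma ins_mem {n : ℕ} {σ : Fin (2*n) → Fin (n+1)} (hσ : σ ∈ StirlingSet n)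
    {g : ℕ} (hg : g ≤ 2*n) : insStir n σ g ∈ StirlingSet (n+1) := by
  obtain ⟨hcount, hbet⟩ := mem_stirling.mp hσ
  rw [mem_stirling]
  constructor
  · intro v hv
    by_cases hvl : v = Fin.last (n+1)
    · subst hvl
      have : (Finset.univ.filter (fun i => insStir n σ g i = Fin.last (n+1)))
          = {(⟨g, by omega⟩ : Fin (2*(n+1))), ⟨g+1, by omega⟩} := by
        apply Finset.ext; intro i
        simp only [Finset.mem_filter, Finset.mem_univ, true_and, Finset.mem_insert,
          Finset.mem_singleton, ins_eq_last_iff σ hg, Fin.ext_iff]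
      rw [this]
      rw [Finset.card_insert_of_notMem (by simp [Fin.ext_iff]), Finset.card_singleton]
    · have hvlt : (v : ℕ) < n + 1 := by
        have h1 := v.isLt
        have h2 : (v : ℕ) ≠ n + 1 := fun h => hvl (Fin.ext (by simp [h]))
        omega
      obtain ⟨u, hvc⟩ : ∃ u : Fin (n+1), v = u.castSucc :=
        ⟨⟨v, hvlt⟩, Fin.ext (by simp)⟩
      have huv : (u : ℕ) = (v : ℕ) := by rw [hvc]; simp
      have hucount := hcount u (by omega)
      have hne : ∀ i : Fin (2*(n+1)), insStir n σ g i = v → (i:ℕ) < g ∨ g + 2 ≤ (i:ℕ) := by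
        intro i hi
        by_contra hc
        push_neg at hc
        rw [ins_val_mid σ g (by omega) (by omega)] at hi
        exact hvl hi.symm
      have key : (Finset.univ.filter (fun i => insStir n σ g i = v)).card
          = (Finset.univ.filter (fun i => σ i = u)).card := by
        refine Finset.card_bij'
          (fun a ha => (⟨if (a:ℕ) < g then (a:ℕ) else (a:ℕ) - 2, by
            have h2 := a.isLt
            have h3 := hne a (by simpa using ha)
            split <;> omega⟩ : Fin (2*n)))
          (fun b _ => (⟨if (b:ℕ) < g then (b:ℕ) else (b:ℕ) + 2, by
            have := b.isLt; split <;> omega⟩ : Fin (2*(n+1))))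
          ?_ ?_ ?_ ?_
        · intro a ha
          simp only [Finset.mem_filter, Finset.mem_univ, true_and] at ha ⊢
          have hout := hne a ha
          have : insStir n σ g a = (σ ⟨if (a:ℕ) < g then (a:ℕ) else (a:ℕ) - 2, by
              have h2 := a.isLt; rcases hout with h | h
              · rw [if_pos h]; omega
              · rw [if_neg (by omega)]; omega⟩).castSucc := by
            apply ins_val_out2 σ hg
            simp only [Fin.val_mk]
            rcases hout with h | h
            · exact Or.inl ⟨h, by rw [if_pos h]⟩
            · exact Or.inr ⟨h, by rw [if_neg (by omega)]; omega⟩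
          rw [this, hvc] at ha
          exact Fin.castSucc_injective _ ha
        · intro b hb
          simp only [Finset.mem_filter, Finset.mem_univ, true_and] at hb ⊢
          have hbv := b.isLt
          have : insStir n σ g (⟨if (b:ℕ) < g then (b:ℕ) else (b:ℕ) + 2, by
              have := b.isLt; split <;> omega⟩ : Fin (2*(n+1))) = (σ b).castSucc := by
            apply ins_val_out2 σ hg
            simp only [Fin.val_mk]
            by_cases hc : (b:ℕ) < g
            · exact Or.inl ⟨by rw [if_pos hc]; exact hc, by rw [if_pos hc]⟩
            · exact Or.inr ⟨by rw [if_neg hc]; omega, by rw [if_neg hc]⟩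
          rw [this, hb, hvc]
        · intro a ha
          apply Fin.ext
          simp only [Fin.val_mk]
          simp only [Finset.mem_filter, Finset.mem_univ, true_and] at ha
          have h3 := hne a ha
          by_cases hc : (a:ℕ) < g
          · simp [hc]
          · rw [if_neg hc, if_neg (by omega)]
            omega
        · intro b hb
          apply Fin.ext
          simp only [Fin.val_mk]
          by_cases hc : (b:ℕ) < g
          · simp [hc]
          · rw [if_neg hc, if_neg (by omega)]
            omega
      rw [key, hucount]
  · intro i j k hij hjk heq
    by_cases hk : insStir n σ g k = Fin.last (n+1)
    · have hkv := (ins_eq_last_iff σ hg k).mp hk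
      have hiv := (ins_eq_last_iff σ hg i).mp (heq.symm ▸ hk : insStir n σ g i = _)
      have h1 : (i:ℕ) < (j:ℕ) := hij
      have h2 : (j:ℕ) < (k:ℕ) := hjk
      omega
    · have hi : insStir n σ g i ≠ Fin.last (n+1) := fun h => hk (heq ▸ h)
      have hiv : (i:ℕ) < g ∨ g + 2 ≤ (i:ℕ) := by
        by_contra hc; push_neg at hc
        exact hi (ins_val_mid σ g (by omega) (by omega))
      have hkv : (k:ℕ) < g ∨ g + 2 ≤ (k:ℕ) := by
        by_contra hc; push_neg at hc
        exact hk (ins_val_mid σ g (by omega) (by omega))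
      have hib := i.isLt
      have hkb := k.isLt
      set i' : Fin (2*n) := ⟨if (i:ℕ) < g then (i:ℕ) else (i:ℕ) - 2, by
        rcases hiv with h | h
        · rw [if_pos h]; omega
        · rw [if_neg (by omega)]; omega⟩ with hi'
      set k' : Fin (2*n) := ⟨if (k:ℕ) < g then (k:ℕ) else (k:ℕ) - 2, by
        rcases hkv with h | h
        · rw [if_pos h]; omega
        · rw [if_neg (by omega)]; omega⟩ with hk'
      have hvi : insStir n σ g i = (σ i').castSucc := by
        apply ins_val_out2 σ hg
        rcases hiv with h | h
        · exact Or.inl ⟨h, by simp [hi', if_pos h]⟩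
        · exact Or.inr ⟨h, by simp [hi', if_neg (show ¬((i:ℕ) < g) from by omega)]; omega⟩
      have hvk : insStir n σ g k = (σ k').castSucc := by
        apply ins_val_out2 σ hg
        rcases hkv with h | h
        · exact Or.inl ⟨h, by simp [hk', if_pos h]⟩
        · exact Or.inr ⟨h, by simp [hk', if_neg (show ¬((k:ℕ) < g) from by omega)]; omega⟩
      by_cases hjv : g ≤ (j:ℕ) ∧ (j:ℕ) < g + 2
      · rw [ins_val_mid σ g hjv.1 hjv.2, hvi]
        exact Fin.castSucc_lt_last _
      · push_neg at hjv
        have hjv' : (j:ℕ) < g ∨ g + 2 ≤ (j:ℕ) := by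
          by_cases hc : g ≤ (j:ℕ)
          · exact Or.inr (hjv hc)
          · exact Or.inl (by omega)
        have hjb := j.isLt
        set j' : Fin (2*n) := ⟨if (j:ℕ) < g then (j:ℕ) else (j:ℕ) - 2, by
          rcases hjv' with h | h
          · rw [if_pos h]; omega
          · rw [if_neg (by omega)]; omega⟩ with hj'
        have hvj : insStir n σ g j = (σ j').castSucc := by
          apply ins_val_out2 σ hg
          rcases hjv' with h | h
          · exact Or.inl ⟨h, by simp [hj', if_pos h]⟩
          · exact Or.inr ⟨h, by simp [hj', if_neg (show ¬((j:ℕ) < g) from by omega)]; omega⟩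
        rw [hvi, hvk] at heq
        have heq' := Fin.castSucc_injective _ heq
        rw [hvi, hvj, Fin.castSucc_lt_castSucc_iff]
        have h1 : (i:ℕ) < (j:ℕ) := hij
        have h2 : (j:ℕ) < (k:ℕ) := hjk
        apply hbet _ _ _ _ _ heq'
        · show (i' : ℕ) < (j' : ℕ)
          simp only [hi', hj', Fin.val_mk]
          split <;> split <;> omega
        · show (j' : ℕ) < (k' : ℕ)
          simp only [hj', hk', Fin.val_mk]
          split <;> split <;> omega

noncomputable def gpos {n : ℕ} (τ : Fin (2*(n+1)) → Fin (n+2)) : ℕ :=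
  sInf {i : ℕ | ∃ h : i < 2*(n+1), τ ⟨i, h⟩ = Fin.last (n+1)}

noncomputable def delStir (n : ℕ) (τ : Fin (2*(n+1)) → Fin (n+2)) (g : ℕ) :
    Fin (2*n) → Fin (n+1) :=
  fun j =>
    if h : ((τ ⟨if (j:ℕ) < g then (j:ℕ) else (j:ℕ)+2,
        by have := j.isLt; split <;> omega⟩ : Fin (n+2)) : ℕ) < n+1
    then ⟨_, h⟩ else 0

lemma del_val2 {n : ℕ} (τ : Fin (2*(n+1)) → Fin (n+2)) (g : ℕ) (j : Fin (2*n))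
    (w : Fin (n+1))
    (h : τ ⟨if (j:ℕ) < g then (j:ℕ) else (j:ℕ)+2, by have := j.isLt; split <;> omega⟩
      = w.castSucc) :
    delStir n τ g j = w := by
  unfold delStir
  rw [dif_pos (by rw [h]; simp; exact Nat.lt_succ_iff.mp w.isLt)]
  apply Fin.ext
  simp [h]

lemma gpos_ins {n : ℕ} (σ : Fin (2*n) → Fin (n+1)) {g : ℕ} (hg : g ≤ 2*n) :
    gpos (insStir n σ g) = g := by
  unfold gpos
  have hmem : g ∈ {i : ℕ | ∃ h : i < 2*(n+1), insStir n σ g ⟨i, h⟩ = Fin.last (n+1)} :=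
    ⟨by omega, (ins_eq_last_iff σ hg _).mpr (Or.inl rfl)⟩
  have h1 := Nat.sInf_le hmem
  have h2 := Nat.sInf_mem (⟨g, hmem⟩ :
    {i : ℕ | ∃ h : i < 2*(n+1), insStir n σ g ⟨i, h⟩ = Fin.last (n+1)}.Nonempty)
  obtain ⟨hlt, hlast⟩ := h2
  have := (ins_eq_last_iff σ hg _).mp hlast
  simp only [Fin.val_mk] at this
  omega

lemma del_ins {n : ℕ} (σ : Fin (2*n) → Fin (n+1)) {g : ℕ} (hg : g ≤ 2*n) :
    delStir n (insStir n σ g) g = σ := by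
  funext j
  apply del_val2
  apply ins_val_out2 σ hg
  simp only [Fin.val_mk]
  have := j.isLt
  by_cases hc : (j:ℕ) < g
  · exact Or.inl ⟨by rw [if_pos hc]; exact hc, by rw [if_pos hc]⟩
  · exact Or.inr ⟨by rw [if_neg hc]; omega, by rw [if_neg hc]⟩

lemma last_pair {n : ℕ} {τ : Fin (2*(n+1)) → Fin (n+2)} (hτ : τ ∈ StirlingSet (n+1)) :
    gpos τ + 1 < 2*(n+1) ∧
    (∀ i : Fin (2*(n+1)), τ i = Fin.last (n+1) ↔
      ((i:ℕ) = gpos τ ∨ (i:ℕ) = gpos τ + 1)) := by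
  obtain ⟨hcount, hbet⟩ := mem_stirling.mp hτ
  have hc2 := hcount (Fin.last (n+1)) (by simp)
  obtain ⟨a, b, hab, hset⟩ := Finset.card_eq_two.mp hc2
  wlog hlt : a < b generalizing a b
  · exact this b a hab.symm (by rw [hset]; ext; simp; tauto) (by
      rcases lt_or_gt_of_ne hab with h | h
      · exact absurd h hlt
      · exact h)
  have hmem : ∀ i : Fin (2*(n+1)), τ i = Fin.last (n+1) ↔ (i = a ∨ i = b) := by
    intro i
    have : i ∈ Finset.univ.filter (fun i => τ i = Fin.last (n+1)) ↔ i ∈ ({a, b} :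
        Finset (Fin (2*(n+1)))) := by rw [hset]
    simpa using this
  have hta : τ a = Fin.last (n+1) := (hmem a).mpr (Or.inl rfl)
  have htb : τ b = Fin.last (n+1) := (hmem b).mpr (Or.inr rfl)
  have hadj : (b : ℕ) = (a : ℕ) + 1 := by
    by_contra hne
    have h1 : (a:ℕ) < (b:ℕ) := hlt
    have hj : ((a:ℕ)+1) < 2*(n+1) := by have := b.isLt; omega
    have hlt2 := hbet a ⟨(a:ℕ)+1, hj⟩ b
      (by show (a:ℕ) < (a:ℕ)+1; omega) (by show (a:ℕ)+1 < (b:ℕ); omega)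
      (by rw [hta, htb])
    rw [hta] at hlt2
    exact absurd hlt2 (not_lt.mpr (Fin.le_last _))
  have hga : gpos τ = (a : ℕ) := by
    unfold gpos
    have hmem' : (a : ℕ) ∈ {i : ℕ | ∃ h : i < 2*(n+1), τ ⟨i, h⟩ = Fin.last (n+1)} :=
      ⟨a.isLt, by rw [show (⟨(a:ℕ), a.isLt⟩ : Fin (2*(n+1))) = a from Fin.ext rfl]; exact hta⟩
    have h1 := Nat.sInf_le hmem'
    obtain ⟨hlt2, hlast2⟩ := Nat.sInf_mem (⟨(a:ℕ), hmem'⟩ :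
      {i : ℕ | ∃ h : i < 2*(n+1), τ ⟨i, h⟩ = Fin.last (n+1)}.Nonempty)
    have := (hmem _).mp hlast2
    rcases this with h | h
    · rw [← h]
    · have : sInf {i : ℕ | ∃ h : i < 2*(n+1), τ ⟨i, h⟩ = Fin.last (n+1)} = (b:ℕ) := by
        rw [← h]
      omega
  constructor
  · rw [hga]; have := b.isLt; omega
  · intro i
    rw [hmem i, hga]
    constructor
    · rintro (rfl | rfl)
      · exact Or.inl rfl
      · exact Or.inr hadj
    · rintro (h | h)
      · exact Or.inl (Fin.ext h)
      · exact Or.inr (Fin.ext (by omega))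

lemma del_val {n : ℕ} {τ : Fin (2*(n+1)) → Fin (n+2)} (hτ : τ ∈ StirlingSet (n+1))
    (j : Fin (2*n)) :
    (delStir n τ (gpos τ) j).castSucc =
      τ ⟨if (j:ℕ) < gpos τ then (j:ℕ) else (j:ℕ)+2, by have := j.isLt; split <;> omega⟩ := by
  obtain ⟨hp, hlast⟩ := last_pair hτ
  set i : Fin (2*(n+1)) := ⟨if (j:ℕ) < gpos τ then (j:ℕ) else (j:ℕ)+2,
    by have := j.isLt; split <;> omega⟩ with hi
  have hne : τ i ≠ Fin.last (n+1) := by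
    intro h
    have := (hlast i).mp h
    simp only [hi, Fin.val_mk] at this
    split at this <;> omega
  have hlt : ((τ i : Fin (n+2)) : ℕ) < n+1 := by
    have h1 := (τ i).isLt
    have h2 : ((τ i : Fin (n+2)) : ℕ) ≠ n+1 := fun h => hne (Fin.ext (by simp [h]))
    omega
  unfold delStir
  rw [dif_pos hlt]
  apply Fin.ext
  simp [hi]

lemma del_mem {n : ℕ} {τ : Fin (2*(n+1)) → Fin (n+2)} (hτ : τ ∈ StirlingSet (n+1)) :
    delStir n τ (gpos τ) ∈ StirlingSet n := by
  obtain ⟨hcount, hbet⟩ := mem_stirling.mp hτ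
  obtain ⟨hp, hlast⟩ := last_pair hτ
  set p := gpos τ with hpdef
  rw [mem_stirling]
  constructor
  · intro v hv
    have hvc : ((v.castSucc : Fin (n+2)) : ℕ) ≠ 0 := by simpa using hv
    have hccount := hcount v.castSucc hvc
    refine Eq.trans ?_ hccount
    have hnl : ∀ i : Fin (2*(n+1)), τ i = v.castSucc → (i:ℕ) < p ∨ p + 2 ≤ (i:ℕ) := by
      intro i hi
      by_contra hc
      push_neg at hc
      have : τ i = Fin.last (n+1) := (hlast i).mpr (by omega)
      rw [hi] at this
      exact absurd this (Fin.ne_of_lt (Fin.castSucc_lt_last v))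
    refine Finset.card_bij'
      (fun j _ => (⟨if (j:ℕ) < p then (j:ℕ) else (j:ℕ)+2,
        by have := j.isLt; split <;> omega⟩ : Fin (2*(n+1))))
      (fun i hi => (⟨if (i:ℕ) < p then (i:ℕ) else (i:ℕ)-2, by
        have h1 := i.isLt
        have h2 := hnl i (by simpa using hi)
        split <;> omega⟩ : Fin (2*n)))
      ?_ ?_ ?_ ?_
    · intro j hj
      simp only [Finset.mem_filter, Finset.mem_univ, true_and] at hj ⊢
      rw [← del_val hτ j, hj]
    · intro i hi
      simp only [Finset.mem_filter, Finset.mem_univ, true_and] at hi ⊢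
      have h2 := hnl i hi
      have h1 := i.isLt
      apply del_val2
      convert hi using 2
      apply Fin.ext
      simp only [Fin.val_mk]
      by_cases hc : (i:ℕ) < p
      · simp [hc]
      · rw [if_neg hc, if_neg (by omega)]
        omega
    · intro j hj
      apply Fin.ext
      simp only [Fin.val_mk]
      have := j.isLt
      by_cases hc : (j:ℕ) < p
      · simp [hc]
      · rw [if_neg hc, if_neg (by omega)]
        omega
    · intro i hi
      apply Fin.ext
      simp only [Fin.val_mk]
      simp only [Finset.mem_filter, Finset.mem_univ, true_and] at hi
      have h2 := hnl i hi
      by_cases hc : (i:ℕ) < p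
      · simp [hc]
      · rw [if_neg hc, if_neg (by omega)]
        omega
  · intro i j k hij hjk heq
    have hcs : ∀ a : Fin (2*n), (delStir n τ p a).castSucc =
        τ ⟨if (a:ℕ) < p then (a:ℕ) else (a:ℕ)+2, by have := a.isLt; split <;> omega⟩ :=
      fun a => del_val hτ a
    have heq2 : τ ⟨if (i:ℕ) < p then (i:ℕ) else (i:ℕ)+2, by have := i.isLt; split <;> omega⟩
        = τ ⟨if (k:ℕ) < p then (k:ℕ) else (k:ℕ)+2, by have := k.isLt; split <;> omega⟩ := by
      rw [← hcs i, ← hcs k, heq]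
    have h1 : (i:ℕ) < (j:ℕ) := hij
    have h2 : (j:ℕ) < (k:ℕ) := hjk
    have hlt := hbet _ _ _ (show (⟨if (i:ℕ) < p then (i:ℕ) else (i:ℕ)+2, by
        have := i.isLt; split <;> omega⟩ : Fin (2*(n+1))) <
        ⟨if (j:ℕ) < p then (j:ℕ) else (j:ℕ)+2, by have := j.isLt; split <;> omega⟩ by
        show (_ : ℕ) < (_ : ℕ)
        simp only [Fin.val_mk]
        split <;> split <;> omega)
      (show (⟨if (j:ℕ) < p then (j:ℕ) else (j:ℕ)+2, by
        have := j.isLt; split <;> omega⟩ : Fin (2*(n+1))) <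
        ⟨if (k:ℕ) < p then (k:ℕ) else (k:ℕ)+2, by have := k.isLt; split <;> omega⟩ by
        show (_ : ℕ) < (_ : ℕ)
        simp only [Fin.val_mk]
        split <;> split <;> omega)
      heq2
    rw [← Fin.castSucc_lt_castSucc_iff, hcs i, hcs j]
    exact hlt

lemma ins_del {n : ℕ} {τ : Fin (2*(n+1)) → Fin (n+2)} (hτ : τ ∈ StirlingSet (n+1)) :
    insStir n (delStir n τ (gpos τ)) (gpos τ) = τ := by
  obtain ⟨hp, hlast⟩ := last_pair hτ
  have hg : gpos τ ≤ 2*n := by omega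
  funext i
  set p := gpos τ with hpdef
  by_cases hmid : p ≤ (i:ℕ) ∧ (i:ℕ) < p + 2
  · rw [ins_val_mid _ p hmid.1 hmid.2]
    exact ((hlast i).mpr (by omega)).symm
  · push_neg at hmid
    have hout : (i:ℕ) < p ∨ p + 2 ≤ (i:ℕ) := by
      by_cases hc : p ≤ (i:ℕ)
      · exact Or.inr (hmid hc)
      · exact Or.inl (by omega)
    have h1 := i.isLt
    set i' : Fin (2*n) := ⟨if (i:ℕ) < p then (i:ℕ) else (i:ℕ)-2, by
      rcases hout with h | h
      · rw [if_pos h]; omega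
      · rw [if_neg (by omega)]; omega⟩ with hi'
    have hins : insStir n (delStir n τ p) p i = ((delStir n τ p) i').castSucc := by
      apply ins_val_out2 _ hg
      rcases hout with h | h
      · exact Or.inl ⟨h, by simp [hi', if_pos h]⟩
      · exact Or.inr ⟨h, by simp [hi', if_neg (show ¬((i:ℕ) < p) from by omega)]; omega⟩
    rw [hins, del_val hτ i']
    congr 1
    apply Fin.ext
    simp only [hi', Fin.val_mk]
    by_cases hc : (i:ℕ) < p
    · simp [hc]; exact hc
    · rw [if_neg hc, if_neg (show ¬((i:ℕ)-2 < p) from by omega)]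
      omega

lemma stir_inner_sum {n : ℕ} {σ : Fin (2*n) → Fin (n+1)} (hσ : σ ∈ StirlingSet n) :
    ∑ g ∈ Finset.range (2*n+1),
      (X 1 : MvPolynomial (Fin 3) ℚ) ^ (2*lapQ (insStir n σ g))
        * X 2 ^ (2*(n+1)+1-2*lapQ (insStir n σ g))
    = (2*n+1-2*lapQ σ) • ((X 1 : MvPolynomial (Fin 3) ℚ) ^ (2*lapQ σ+2)
        * X 2 ^ (2*n+1-2*lapQ σ))
      + (2*lapQ σ) • ((X 1 : MvPolynomial (Fin 3) ℚ) ^ (2*lapQ σ)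
        * X 2 ^ (2*n+3-2*lapQ σ)) := by
  classical
  have hk := lapQ_le hσ
  rw [← Finset.sum_filter_add_sum_filter_not (Finset.range (2*n+1))
    (fun g => IsLap σ g ∨ IsLap σ (g+1))]
  have h1 : ∀ g ∈ (Finset.range (2*n+1)).filter (fun g => IsLap σ g ∨ IsLap σ (g+1)),
      (X 1 : MvPolynomial (Fin 3) ℚ) ^ (2*lapQ (insStir n σ g))
        * X 2 ^ (2*(n+1)+1-2*lapQ (insStir n σ g))
      = (X 1 : MvPolynomial (Fin 3) ℚ) ^ (2*lapQ σ) * X 2 ^ (2*n+3-2*lapQ σ) := by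
    intro g hg
    simp only [Finset.mem_filter, Finset.mem_range] at hg
    have heq := lapQ_ins hσ (show g ≤ 2*n from by omega)
    rw [if_pos hg.2] at heq
    have : lapQ (insStir n σ g) = lapQ σ := by omega
    rw [this, show 2*(n+1)+1-2*lapQ σ = 2*n+3-2*lapQ σ from by omega]
  have h2 : ∀ g ∈ (Finset.range (2*n+1)).filter (fun g => ¬(IsLap σ g ∨ IsLap σ (g+1))),
      (X 1 : MvPolynomial (Fin 3) ℚ) ^ (2*lapQ (insStir n σ g))
        * X 2 ^ (2*(n+1)+1-2*lapQ (insStir n σ g))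
      = (X 1 : MvPolynomial (Fin 3) ℚ) ^ (2*lapQ σ+2) * X 2 ^ (2*n+1-2*lapQ σ) := by
    intro g hg
    simp only [Finset.mem_filter, Finset.mem_range] at hg
    have heq := lapQ_ins hσ (show g ≤ 2*n from by omega)
    rw [if_neg hg.2] at heq
    have : lapQ (insStir n σ g) = lapQ σ + 1 := by omega
    rw [this, show 2*(lapQ σ+1) = 2*lapQ σ+2 from by omega,
      show 2*(n+1)+1-(2*lapQ σ+2) = 2*n+1-2*lapQ σ from by omega]
  rw [Finset.sum_congr rfl h1, Finset.sum_congr rfl h2, Finset.sum_const, Finset.sum_const]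
  have hcard1 : ((Finset.range (2*n+1)).filter
      (fun g => IsLap σ g ∨ IsLap σ (g+1))).card = 2 * lapQ σ := card_glap hσ
  have hcard2 : ((Finset.range (2*n+1)).filter
      (fun g => ¬(IsLap σ g ∨ IsLap σ (g+1)))).card = 2*n+1 - 2*lapQ σ := by
    have := Finset.card_filter_add_card_filter_not (s := Finset.range (2*n+1))
      (p := fun g => IsLap σ g ∨ IsLap σ (g+1))
    rw [hcard1, Finset.card_range] at this
    omega
  rw [hcard1, hcard2]
  ring

lemma stir_sum_succ {n : ℕ} {M : Type*} [AddCommMonoid M]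
    (f : (Fin (2*(n+1)) → Fin (n+2)) → M) :
    ∑ τ ∈ StirlingSet (n+1), f τ
    = ∑ σ ∈ StirlingSet n, ∑ g ∈ Finset.range (2*n+1), f (insStir n σ g) := by
  rw [Finset.sum_sigma']
  refine Finset.sum_nbij' (i := fun τ => ⟨delStir n τ (gpos τ), gpos τ⟩)
    (j := fun q => insStir n q.1 q.2) ?_ ?_ ?_ ?_ ?_
  · intro τ hτ
    rw [Finset.mem_sigma]
    have := (last_pair hτ).1
    refine ⟨del_mem hτ, ?_⟩
    simp only [Finset.mem_range]
    omega
  · intro q hq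
    rw [Finset.mem_sigma, Finset.mem_range] at hq
    exact ins_mem hq.1 (by omega)
  · intro τ hτ
    exact ins_del hτ
  · intro q hq
    rw [Finset.mem_sigma, Finset.mem_range] at hq
    obtain ⟨σ, g⟩ := q
    have hg : g ≤ 2*n := by have : g < 2*n+1 := by simpa using hq.2
                            omega
    simp only
    rw [gpos_ins σ hg, del_ins σ hg]
  · intro τ hτ
    rw [ins_del hτ]

theorem statement_4
    (D : Derivation ℚ (MvPolynomial (Fin 3) ℚ) (MvPolynomial (Fin 3) ℚ))
    (hx : D (X 0) = X 0 * X 1 * X 2)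
    (hy : D (X 1) = X 1 * X 2 ^ 2)
    (hz : D (X 2) = X 1 ^ 2 * X 2) (n : ℕ) :
    (D.toLinearMap ^ n) (X 2) =
      X 2 * ∑ σ ∈ StirlingSet n, X 1 ^ (2 * lapQ σ) * X 2 ^ (2 * n - 2 * lapQ σ) := by
  have main : ∀ m : ℕ, (D.toLinearMap ^ m) (X 2) =
      ∑ σ ∈ StirlingSet m, (X 1 : MvPolynomial (Fin 3) ℚ) ^ (2 * lapQ σ)
        * X 2 ^ (2*m+1-2*lapQ σ) := by
    intro m
    induction m with
    | zero =>
      haveI : Unique (Fin (2*0) → Fin (0+1)) :=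
        ⟨⟨fun i => Fin.elim0 i⟩, fun f => funext fun i => Fin.elim0 i⟩
      have hu : StirlingSet 0 = Finset.univ := by
        apply Finset.filter_true_of_mem
        intro σ _
        constructor
        · intro v hv
          exact absurd (by omega : (v:ℕ) = 0) hv
        · intro i
          exact Fin.elim0 (show Fin 0 from i)
      have hlap : ∀ σ : Fin (2*0) → Fin (0+1), lapQ σ = 0 := by
        intro σ
        unfold lapQ
        rw [show (2*0-1 : ℕ) = 0 from rfl, Finset.Icc_eq_empty (by omega)]
        simp
      rw [pow_zero, Module.End.one_apply, hu, Finset.univ_unique, Finset.sum_singleton,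
        hlap, mul_zero, pow_zero, one_mul]
      norm_num
    | succ m ih =>
      have hstep : (D.toLinearMap ^ (m+1)) (X 2 : MvPolynomial (Fin 3) ℚ)
          = D ((D.toLinearMap ^ m) (X 2)) := by
        rw [pow_succ', Module.End.mul_apply]
        rfl
      rw [hstep, ih, map_sum]
      rw [stir_sum_succ (n := m) (fun τ => (X 1 : MvPolynomial (Fin 3) ℚ) ^ (2 * lapQ τ)
        * X 2 ^ (2*(m+1)+1-2*lapQ τ))]
      apply Finset.sum_congr rfl
      intro σ hσ
      rw [stir_inner_sum hσ]
      have hk := lapQ_le hσ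
      set k := lapQ σ with hkdef
      rw [Derivation.leibniz, Derivation.leibniz_pow, Derivation.leibniz_pow, hy, hz]
      simp only [smul_eq_mul]
      rw [mul_smul_comm, mul_smul_comm]
      have e1 : (X 1 : MvPolynomial (Fin 3) ℚ) ^ (2*k)
            * (X 2 ^ (2*m+1-2*k-1) * (X 1 ^ 2 * X 2))
          = X 1 ^ (2*k+2) * X 2 ^ (2*m+1-2*k) := by
        rw [show 2*m+1-2*k = (2*m-2*k)+1 from by omega,
          show (2*m-2*k)+1-1 = 2*m-2*k from by omega]
        ring
      have e2 : (2*k) • ((X 2 : MvPolynomial (Fin 3) ℚ) ^ (2*m+1-2*k)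
            * (X 1 ^ (2*k-1) * (X 1 * X 2 ^ 2)))
          = (2*k) • ((X 1 : MvPolynomial (Fin 3) ℚ) ^ (2*k) * X 2 ^ (2*m+3-2*k)) := by
        rcases Nat.eq_zero_or_pos k with hk0 | hpos
        · rw [hk0]
          simp
        · congr 1
          rw [show 2*m+3-2*k = (2*m+1-2*k)+2 from by omega,
            show 2*k = (2*k-1)+1 from by omega,
            show (2*k-1)+1-1 = 2*k-1 from by omega]
          ring
      rw [e1, e2]
  rw [main n, Finset.mul_sum]
  apply Finset.sum_congr rfl
  intro σ hσ
  have hk := lapQ_le hσ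
  rw [show 2*n+1-2*lapQ σ = (2*n-2*lapQ σ)+1 from by omega, pow_succ]
  ring
end
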